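/- For every integer k ≥ 2, the unique k-critical digraph on k+1 vertices is D^±(K_{k−2}) ⊞ C⃗₃, the Dirac join of the complete biorientation of K_{k−2} with a directed 3-cycle. -/

import Mathlib

/-- A finite simple digraph with vertices drawn from `ℕ`:
no loops, no parallel arcs in the same direction (arcs form a relation),
but antiparallel arcs are allowed. -/
structure Digraph' where
  verts : Finset ℕ
  Adj : ℕ → ℕ → Prop
  adj_mem : ∀ ⦃u v⦄, Adj u v → u ∈ verts ∧ v ∈ verts
  loopless : ∀ v, ¬ Adj v v

namespace Digraph'

/-- The order (number of vertices) of a digraph. -/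
def order (D : Digraph') : ℕ := D.verts.card

/-- The number of arcs of a digraph. -/
noncomputable def numArcs (D : Digraph') : ℕ :=
  Nat.card {a : ℕ × ℕ // D.Adj a.1 a.2}

/-- The set `S` induces an acyclic subdigraph of `D` (no directed cycle inside `S`). -/
def AcyclicOn (D : Digraph') (S : Set ℕ) : Prop :=
  ∀ v, ¬ Relation.TransGen (fun a b => a ∈ S ∧ b ∈ S ∧ D.Adj a b) v v

/-- A digraph is acyclic if it contains no directed cycle. -/
def IsAcyclic (D : Digraph') : Prop :=
  ∀ v, ¬ Relation.TransGen D.Adj v v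

/-- `φ` is an acyclic `k`-coloring of `D`: it uses colors `< k` on the vertices and
every color class induces an acyclic subdigraph. -/
def IsAcyclicColoring (D : Digraph') (k : ℕ) (φ : ℕ → ℕ) : Prop :=
  (∀ v ∈ D.verts, φ v < k) ∧ ∀ c, D.AcyclicOn {v | v ∈ D.verts ∧ φ v = c}

/-- `D` admits an acyclic `k`-coloring. -/
def Colorable (D : Digraph') (k : ℕ) : Prop := ∃ φ, D.IsAcyclicColoring k φ

/-- The dichromatic number of `D`. -/
noncomputable def dichrom (D : Digraph') : ℕ := sInf {k | D.Colorable k}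

/-- `H` is a subdigraph of `D`. -/
def IsSubdigraph (H D : Digraph') : Prop :=
  H.verts ⊆ D.verts ∧ ∀ ⦃u v⦄, H.Adj u v → D.Adj u v

/-- `D` is critical: every proper subdigraph has a strictly smaller dichromatic number. -/
def Critical (D : Digraph') : Prop :=
  ∀ H, IsSubdigraph H D → H ≠ D → dichrom H < dichrom D

/-- `D` is `k`-critical. -/
def IsCritical (D : Digraph') (k : ℕ) : Prop := D.dichrom = k ∧ D.Critical

/-- The digraph obtained from `D` by deleting the vertex `x`. -/
def delVert (D : Digraph') (x : ℕ) : Digraph' where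
  verts := D.verts.erase x
  Adj u v := D.Adj u v ∧ u ≠ x ∧ v ≠ x
  adj_mem := by
    intro u v h
    rcases h with ⟨h, hu, hv⟩
    exact ⟨Finset.mem_erase.2 ⟨hu, (D.adj_mem h).1⟩, Finset.mem_erase.2 ⟨hv, (D.adj_mem h).2⟩⟩
  loopless := by intro v h; exact D.loopless v h.1

/-- The digraph obtained from `D` by deleting the arc `xy`. -/
def delArc (D : Digraph') (x y : ℕ) : Digraph' where
  verts := D.verts
  Adj u v := D.Adj u v ∧ ¬(u = x ∧ v = y)
  adj_mem := by intro u v h; exact D.adj_mem h.1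
  loopless := by intro v h; exact D.loopless v h.1

/-- The out-degree of `v` in `D`. -/
noncomputable def outDeg (D : Digraph') (v : ℕ) : ℕ := Nat.card {w // D.Adj v w}

/-- The in-degree of `v` in `D`. -/
noncomputable def inDeg (D : Digraph') (v : ℕ) : ℕ := Nat.card {w // D.Adj w v}

/-- `D` is the complete biorientation of a complete graph on its vertex set. -/
def IsBiorientedComplete (D : Digraph') : Prop :=
  ∀ u v, D.Adj u v ↔ (u ∈ D.verts ∧ v ∈ D.verts ∧ u ≠ v)

/-- `D` is a directed cycle (of length at least `2`; length `2` is a digon):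
every vertex has out-degree and in-degree one and `D` is strongly connected. -/
def IsDirectedCycle (D : Digraph') : Prop :=
  2 ≤ D.verts.card ∧
  (∀ v ∈ D.verts, D.outDeg v = 1 ∧ D.inDeg v = 1) ∧
  ∀ u ∈ D.verts, ∀ v ∈ D.verts, Relation.TransGen D.Adj u v

/-- `D` is the Dirac join of the disjoint digraphs `D₁` and `D₂`: the union of `D₁`
and `D₂` together with all arcs in both directions between them. -/
def IsDiracJoin (D D₁ D₂ : Digraph') : Prop :=
  Disjoint D₁.verts D₂.verts ∧
  D.verts = D₁.verts ∪ D₂.verts ∧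
  ∀ u v, D.Adj u v ↔ (D₁.Adj u v ∨ D₂.Adj u v ∨
    (u ∈ D₁.verts ∧ v ∈ D₂.verts) ∨ (u ∈ D₂.verts ∧ v ∈ D₁.verts))

/-- `v` is a dominating vertex of `D`: it is joined by arcs in both directions to
all other vertices of `D`. -/
def IsDominatingVertex (D : Digraph') (v : ℕ) : Prop :=
  v ∈ D.verts ∧ ∀ u ∈ D.verts, u ≠ v → D.Adj u v ∧ D.Adj v u

/-- The number of dominating vertices of `D`. -/
noncomputable def numDomVerts (D : Digraph') : ℕ :=
  {v | D.IsDominatingVertex v}.ncard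

/-- `C` is a dominating subdigraph of `D`. -/
def IsDominatingSubdigraph (D C : Digraph') : Prop :=
  ∃ D'' : Digraph', D''.verts.Nonempty ∧ IsDiracJoin D C D''

/-- The number of dominating directed cycles of order at least three of `D`. -/
noncomputable def numDomCycles (D : Digraph') : ℕ :=
  {C : Digraph' | IsSubdigraph C D ∧ C.IsDirectedCycle ∧ 3 ≤ C.order ∧
    D.IsDominatingSubdigraph C}.ncard

/-- The complement of `D` (on the same vertex set). -/
def compl (D : Digraph') : Digraph' where
  verts := D.verts
  Adj u v := u ∈ D.verts ∧ v ∈ D.verts ∧ u ≠ v ∧ ¬ D.Adj u v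
  adj_mem := by intro u v h; exact ⟨h.1, h.2.1⟩
  loopless := by intro v h; exact h.2.2.1 rfl

/-- `D` is connected (its underlying undirected graph is connected). -/
def Connected (D : Digraph') : Prop :=
  D.verts.Nonempty ∧ ∀ u ∈ D.verts, ∀ v ∈ D.verts,
    Relation.ReflTransGen (fun a b => D.Adj a b ∨ D.Adj b a) u v

/-- `φ` is a proper `k`-coloring of the symmetric digraph `D` viewed as a graph. -/
def IsProperColoring (D : Digraph') (k : ℕ) (φ : ℕ → ℕ) : Prop :=
  (∀ v ∈ D.verts, φ v < k) ∧ ∀ u v, D.Adj u v → φ u ≠ φ v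

/-- The chromatic number of (the underlying graph of) `D`. -/
noncomputable def chrom (D : Digraph') : ℕ := sInf {k | ∃ φ, D.IsProperColoring k φ}

/-- `D` belongs to the (complete biorientation of the) Gallai--Dirac class `DG(k)`. -/
def InDGClass (D : Digraph') (k : ℕ) : Prop :=
  ∃ (X Y₁ Y₂ : Finset ℕ) (v₁ v₂ : ℕ),
    X.Nonempty ∧ Y₁.Nonempty ∧ Y₂.Nonempty ∧
    Disjoint X Y₁ ∧ Disjoint X Y₂ ∧ Disjoint Y₁ Y₂ ∧
    v₁ ∉ X ∪ Y₁ ∪ Y₂ ∧ v₂ ∉ X ∪ Y₁ ∪ Y₂ ∧ v₁ ≠ v₂ ∧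
    Y₁.card + Y₂.card = k - 1 ∧ X.card + 1 = k - 1 ∧
    D.verts = X ∪ Y₁ ∪ Y₂ ∪ {v₁, v₂} ∧
    (∀ u v, D.Adj u v ↔ (u ≠ v ∧
      ((u ∈ X ∧ v ∈ X) ∨ (u ∈ Y₁ ∪ Y₂ ∧ v ∈ Y₁ ∪ Y₂) ∨
       (u = v₁ ∧ v ∈ X ∪ Y₁) ∨ (v = v₁ ∧ u ∈ X ∪ Y₁) ∨
       (u = v₂ ∧ v ∈ X ∪ Y₂) ∨ (v = v₂ ∧ u ∈ X ∪ Y₂))))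

end Digraph'

/-- The minimum number of arcs in a `k`-critical digraph of order `n`. -/
noncomputable def extArcs (k n : ℕ) : ℕ :=
  sInf {m | ∃ D : Digraph', D.IsCritical k ∧ D.order = n ∧ D.numArcs = m}

open Digraph'

namespace Dig15

open Digraph'

lemma acyclicOn_mono {D : Digraph'} {S T : Set ℕ} (hST : S ⊆ T) (hT : D.AcyclicOn T) :
    D.AcyclicOn S := by
  intro v hv
  exact hT v (Relation.TransGen.mono (fun a b ⟨ha, hb, hadj⟩ => ⟨hST ha, hST hb, hadj⟩) _ _ hv)

lemma acyclicOn_rel_imp {D E : Digraph'} {S : Set ℕ}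
    (h : ∀ a b, a ∈ S → b ∈ S → D.Adj a b → E.Adj a b) (hE : E.AcyclicOn S) :
    D.AcyclicOn S := by
  intro v hv
  exact hE v (Relation.TransGen.mono (fun a b ⟨ha, hb, hadj⟩ => ⟨ha, hb, h a b ha hb hadj⟩) _ _ hv)

lemma not_acyclicOn_digon {D : Digraph'} {S : Set ℕ} {u v : ℕ} (hu : u ∈ S) (hv : v ∈ S)
    (h1 : D.Adj u v) (h2 : D.Adj v u) : ¬ D.AcyclicOn S := by
  intro hS
  exact hS u (Relation.TransGen.head ⟨hu, hv, h1⟩ (Relation.TransGen.single ⟨hv, hu, h2⟩))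

lemma not_acyclicOn_triangle {D : Digraph'} {S : Set ℕ} {u v w : ℕ}
    (hu : u ∈ S) (hv : v ∈ S) (hw : w ∈ S)
    (h1 : D.Adj u v) (h2 : D.Adj v w) (h3 : D.Adj w u) : ¬ D.AcyclicOn S := by
  intro hS
  exact hS u (Relation.TransGen.head ⟨hu, hv, h1⟩
    (Relation.TransGen.head ⟨hv, hw, h2⟩ (Relation.TransGen.single ⟨hw, hu, h3⟩)))

lemma acyclicOn_of_rank {D : Digraph'} {S : Set ℕ} (rk : ℕ → ℕ)
    (h : ∀ a b, a ∈ S → b ∈ S → D.Adj a b → rk a < rk b) : D.AcyclicOn S := by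
  intro v hv
  have key : ∀ a b, Relation.TransGen (fun a b => a ∈ S ∧ b ∈ S ∧ D.Adj a b) a b →
      rk a < rk b := by
    intro a b hab
    induction hab with
    | single h1 => exact h _ _ h1.1 h1.2.1 h1.2.2
    | tail _ h2 ih => exact ih.trans (h _ _ h2.1 h2.2.1 h2.2.2)
  exact absurd (key v v hv) (lt_irrefl _)

lemma acyclicOn_subsingleton {D : Digraph'} {S : Set ℕ}
    (h : ∀ a ∈ S, ∀ b ∈ S, a = b) : D.AcyclicOn S := by
  intro v hv
  rcases Relation.TransGen.head'_iff.1 hv with ⟨b, ⟨ha, hb, hadj⟩, -⟩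
  exact D.loopless v (h v ha b hb ▸ hadj)

lemma acyclicOn_pair {D : Digraph'} {x y : ℕ} (h : ¬ D.Adj x y) : D.AcyclicOn {x, y} := by
  apply acyclicOn_of_rank (fun w => if w = y then 0 else 1)
  intro a b ha hb hadj
  simp only [Set.mem_insert_iff, Set.mem_singleton_iff] at ha hb
  rcases ha with rfl | rfl
  · rcases hb with rfl | rfl
    · exact absurd hadj (D.loopless _)
    · exact absurd hadj h
  · rcases hb with rfl | rfl
    · by_cases hxy : b = a
      · exact absurd (hxy ▸ hadj) (D.loopless _)
      · simp [hxy]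
    · exact absurd hadj (D.loopless _)

lemma digraph_ext {D E : Digraph'} (h1 : D.verts = E.verts)
    (h2 : ∀ u v, D.Adj u v ↔ E.Adj u v) : D = E := by
  have h2' : D.Adj = E.Adj := funext fun u => funext fun v => propext (h2 u v)
  cases D; cases E
  simp only at h1 h2'
  subst h1; subst h2'
  rfl

lemma colorable_subdigraph {H D : Digraph'} (hsub : IsSubdigraph H D) {m : ℕ}
    (h : D.Colorable m) : H.Colorable m := by
  obtain ⟨φ, hb, hc⟩ := h
  refine ⟨φ, fun v hv => hb v (hsub.1 hv), fun c => ?_⟩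
  apply acyclicOn_rel_imp (E := D) (fun a b _ _ h => hsub.2 h)
  apply acyclicOn_mono _ (hc c)
  intro w ⟨hw1, hw2⟩
  exact ⟨hsub.1 hw1, hw2⟩

lemma colorable_mono {D : Digraph'} {m m' : ℕ} (h : m ≤ m') (hc : D.Colorable m) :
    D.Colorable m' := by
  obtain ⟨φ, hb, hcl⟩ := hc
  exact ⟨φ, fun v hv => lt_of_lt_of_le (hb v hv) h, hcl⟩

lemma colorable_card (D : Digraph') : D.Colorable D.verts.card := by
  classical
  refine ⟨fun v => if h : v ∈ D.verts then (D.verts.equivFin ⟨v, h⟩ : ℕ) else 0, ?_, ?_⟩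
  · intro v hv; simp only [dif_pos hv]; exact (D.verts.equivFin ⟨v, hv⟩).isLt
  · intro c
    apply acyclicOn_subsingleton
    rintro a ⟨ha, hac⟩ b ⟨hb, hbc⟩
    simp only [dif_pos ha] at hac
    simp only [dif_pos hb] at hbc
    have : D.verts.equivFin ⟨a, ha⟩ = D.verts.equivFin ⟨b, hb⟩ := by
      apply Fin.ext; rw [hac, hbc]
    have := D.verts.equivFin.injective this
    exact Subtype.mk_eq_mk.1 this

lemma dichrom_le_of_colorable {D : Digraph'} {m : ℕ} (h : D.Colorable m) : D.dichrom ≤ m :=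
  Nat.sInf_le h

lemma colorable_of_dichrom_le {D : Digraph'} {m : ℕ} (h : D.dichrom ≤ m) : D.Colorable m := by
  have hne : {k | D.Colorable k}.Nonempty := ⟨_, colorable_card D⟩
  have := Nat.sInf_mem hne
  exact colorable_mono h this

lemma not_colorable_lt {D : Digraph'} {k m : ℕ} (hd : D.dichrom = k) (hm : m < k) :
    ¬ D.Colorable m := by
  intro h
  exact absurd (hd ▸ dichrom_le_of_colorable h) (by omega)

end Dig15
namespace Dig15
open Digraph'

lemma acyclicOn_insert_out {D : Digraph'} {S : Set ℕ} {v : ℕ} (hS : D.AcyclicOn S)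
    (hout : ∀ w ∈ S, ¬ D.Adj v w) : D.AcyclicOn (insert v S) := by
  set r₁ := fun a b => a ∈ insert v S ∧ b ∈ insert v S ∧ D.Adj a b with hr₁
  set r₀ := fun a b => a ∈ S ∧ b ∈ S ∧ D.Adj a b with hr₀
  have hv : ∀ b, ¬ r₁ v b := by
    rintro b ⟨-, hb, hadj⟩
    rcases hb with rfl | hb
    · exact D.loopless _ hadj
    · exact hout b hb hadj
  have aux : ∀ a b, Relation.TransGen r₁ a b → b ≠ v → a ≠ v → Relation.TransGen r₀ a b := by
    intro a b hab hbv
    induction hab using Relation.TransGen.head_induction_on with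
    | single h =>
      intro hav
      rcases h with ⟨ha, hb, hadj⟩
      exact Relation.TransGen.single ⟨ha.resolve_left hav, hb.resolve_left hbv, hadj⟩
    | head h₁ h₂ ih =>
      rename_i a' c'
      intro hav
      by_cases hcv : c' = v
      · subst hcv
        rcases Relation.TransGen.head'_iff.1 h₂ with ⟨d, hd, -⟩
        exact absurd hd (hv d)
      · rcases h₁ with ⟨ha, hc, hadj⟩
        exact Relation.TransGen.head ⟨ha.resolve_left hav, hc.resolve_left hcv, hadj⟩ (ih hcv)
  intro w hw
  by_cases hwv : w = v
  · subst hwv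
    rcases Relation.TransGen.head'_iff.1 hw with ⟨d, hd, -⟩
    exact absurd hd (hv d)
  · exact hS w (aux w w hw hwv hwv)

lemma acyclicOn_insert_in {D : Digraph'} {S : Set ℕ} {v : ℕ} (hS : D.AcyclicOn S)
    (hin : ∀ w ∈ S, ¬ D.Adj w v) : D.AcyclicOn (insert v S) := by
  set r₁ := fun a b => a ∈ insert v S ∧ b ∈ insert v S ∧ D.Adj a b with hr₁
  set r₀ := fun a b => a ∈ S ∧ b ∈ S ∧ D.Adj a b with hr₀
  have hv : ∀ a, ¬ r₁ a v := by
    rintro a ⟨ha, -, hadj⟩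
    rcases ha with rfl | ha
    · exact D.loopless _ hadj
    · exact hin a ha hadj
  have aux : ∀ a b, Relation.TransGen r₁ a b → b ≠ v → a ≠ v → Relation.TransGen r₀ a b := by
    intro a b hab hbv
    induction hab using Relation.TransGen.head_induction_on with
    | single h =>
      intro hav
      rcases h with ⟨ha, hb, hadj⟩
      exact Relation.TransGen.single ⟨ha.resolve_left hav, hb.resolve_left hbv, hadj⟩
    | head h₁ h₂ ih =>
      rename_i a' c'
      intro hav
      have hcv : c' ≠ v := by
        intro hcv; subst hcv; exact hv a' h₁
      rcases h₁ with ⟨ha, hc, hadj⟩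
      exact Relation.TransGen.head ⟨ha.resolve_left hav, hc.resolve_left hcv, hadj⟩ (ih hcv)
  intro w hw
  by_cases hwv : w = v
  · subst hwv
    rcases Relation.TransGen.tail'_iff.1 hw with ⟨d, -, hd⟩
    exact absurd hd (hv d)
  · exact hS w (aux w w hw hwv hwv)

lemma colorable_extend {D : Digraph'} {v : ℕ} (hv : v ∈ D.verts) {m : ℕ} {φ : ℕ → ℕ}
    (hφ : (D.delVert v).IsAcyclicColoring m φ) {c : ℕ} (hc : c < m)
    (hfree : (∀ w, D.Adj v w → φ w ≠ c) ∨ (∀ w, D.Adj w v → φ w ≠ c)) :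
    D.Colorable m := by
  classical
  obtain ⟨hb, hcl⟩ := hφ
  refine ⟨Function.update φ v c, ?_, ?_⟩
  · intro w hw
    by_cases hwv : w = v
    · subst hwv; rw [Function.update_self]; exact hc
    · rw [Function.update_of_ne hwv]
      exact hb w (Finset.mem_erase.2 ⟨hwv, hw⟩)
  · intro c'
    by_cases hcc : c = c'
    · subst hcc
      have hset : {w | w ∈ D.verts ∧ Function.update φ v c w = c} =
          insert v {w | w ∈ (D.delVert v).verts ∧ φ w = c} := by
        ext w
        simp only [Set.mem_setOf_eq, Set.mem_insert_iff, delVert, Finset.mem_erase]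
        by_cases hwv : w = v
        · subst hwv; simp [Function.update_self, hv]
        · simp [Function.update_of_ne hwv, hwv, and_assoc]
      rw [hset]
      have hold : D.AcyclicOn {w | w ∈ (D.delVert v).verts ∧ φ w = c} := by
        apply acyclicOn_rel_imp (E := D.delVert v) _ (hcl c)
        rintro a b ⟨ha, -⟩ ⟨hb', -⟩ hadj
        exact ⟨hadj, (Finset.mem_erase.1 ha).1, (Finset.mem_erase.1 hb').1⟩
      rcases hfree with hfree | hfree
      · apply acyclicOn_insert_out hold
        rintro w ⟨-, hwc⟩ hadj
        exact hfree w hadj hwc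
      · apply acyclicOn_insert_in hold
        rintro w ⟨-, hwc⟩ hadj
        exact hfree w hadj hwc
    · have hset : {w | w ∈ D.verts ∧ Function.update φ v c w = c'} =
          {w | w ∈ (D.delVert v).verts ∧ φ w = c'} := by
        ext w
        simp only [Set.mem_setOf_eq, delVert, Finset.mem_erase]
        constructor
        · rintro ⟨hw, hwc⟩
          by_cases hwv : w = v
          · subst hwv; rw [Function.update_self] at hwc; exact absurd hwc hcc
          · rw [Function.update_of_ne hwv] at hwc; exact ⟨⟨hwv, hw⟩, hwc⟩
        · rintro ⟨⟨hwv, hw⟩, hwc⟩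
          exact ⟨hw, by rw [Function.update_of_ne hwv]; exact hwc⟩
      rw [hset]
      apply acyclicOn_rel_imp (E := D.delVert v) _ (hcl c')
      rintro a b ⟨ha, -⟩ ⟨hb', -⟩ hadj
      exact ⟨hadj, (Finset.mem_erase.1 ha).1, (Finset.mem_erase.1 hb').1⟩

end Dig15
namespace Dig15
open Digraph'

lemma build1 {D : Digraph'} {B : Finset ℕ} (hB : B ⊆ D.verts) (hA : D.AcyclicOn ↑B) :
    D.Colorable (D.verts.card - B.card + 1) := by
  classical
  set T := D.verts \ B with hT
  have hTcard : T.card = D.verts.card - B.card := Finset.card_sdiff_of_subset hB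
  refine ⟨fun v => if v ∈ B then 0 else if h : v ∈ T then (T.equivFin ⟨v, h⟩ : ℕ) + 1 else 0,
    ?_, ?_⟩
  · intro v hv
    by_cases hvB : v ∈ B
    · simp [hvB]
    · have hvT : v ∈ T := Finset.mem_sdiff.2 ⟨hv, hvB⟩
      simp only [if_neg hvB, dif_pos hvT]
      have := (T.equivFin ⟨v, hvT⟩).isLt
      omega
  · intro c
    rcases c with _ | n
    · have hset : {v | v ∈ D.verts ∧ (if v ∈ B then 0 else if h : v ∈ T then
          (T.equivFin ⟨v, h⟩ : ℕ) + 1 else 0) = 0} = ↑B := by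
        ext w
        simp only [Set.mem_setOf_eq, Finset.coe_mem, Finset.mem_coe]
        constructor
        · rintro ⟨hw, hw0⟩
          by_cases hwB : w ∈ B
          · exact hwB
          · have hwT : w ∈ T := Finset.mem_sdiff.2 ⟨hw, hwB⟩
            rw [if_neg hwB, dif_pos hwT] at hw0
            omega
        · intro hwB
          exact ⟨hB hwB, by simp [hwB]⟩
      rw [hset]; exact hA
    · apply acyclicOn_subsingleton
      rintro a ⟨ha, hac⟩ b ⟨hb, hbc⟩
      dsimp only at hac hbc
      by_cases haB : a ∈ B
      · simp [haB] at hac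
      by_cases hbB : b ∈ B
      · simp [hbB] at hbc
      have haT : a ∈ T := Finset.mem_sdiff.2 ⟨ha, haB⟩
      have hbT : b ∈ T := Finset.mem_sdiff.2 ⟨hb, hbB⟩
      rw [if_neg haB, dif_pos haT] at hac
      rw [if_neg hbB, dif_pos hbT] at hbc
      have : T.equivFin ⟨a, haT⟩ = T.equivFin ⟨b, hbT⟩ := by
        apply Fin.ext; omega
      exact Subtype.mk_eq_mk.1 (T.equivFin.injective this)

lemma build2 {D : Digraph'} {B₁ B₂ : Finset ℕ} (h1 : B₁ ⊆ D.verts) (h2 : B₂ ⊆ D.verts)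
    (hd : Disjoint B₁ B₂) (hA1 : D.AcyclicOn ↑B₁) (hA2 : D.AcyclicOn ↑B₂) :
    D.Colorable (D.verts.card - B₁.card - B₂.card + 2) := by
  classical
  set T := (D.verts \ B₁) \ B₂ with hT
  have hTcard : T.card = D.verts.card - B₁.card - B₂.card := by
    rw [hT, Finset.card_sdiff_of_subset, Finset.card_sdiff_of_subset h1]
    intro x hx
    exact Finset.mem_sdiff.2 ⟨h2 hx, fun hx1 => (Finset.disjoint_left.1 hd) hx1 hx⟩
  refine ⟨fun v => if v ∈ B₁ then 0 else if v ∈ B₂ then 1 else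
      if h : v ∈ T then (T.equivFin ⟨v, h⟩ : ℕ) + 2 else 0, ?_, ?_⟩
  · intro v hv
    by_cases hv1 : v ∈ B₁
    · simp [hv1]
    by_cases hv2 : v ∈ B₂
    · simp [hv1, hv2]
    · have hvT : v ∈ T := by simp [hT, Finset.mem_sdiff, hv, hv1, hv2]
      simp only [if_neg hv1, if_neg hv2, dif_pos hvT]
      have := (T.equivFin ⟨v, hvT⟩).isLt
      omega
  · intro c
    have hmemT : ∀ w, w ∈ D.verts → w ∉ B₁ → w ∉ B₂ → w ∈ T := by
      intro w hw hw1 hw2; simp [hT, Finset.mem_sdiff, hw, hw1, hw2]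
    match c with
    | 0 =>
      have hset : {v | v ∈ D.verts ∧ (if v ∈ B₁ then 0 else if v ∈ B₂ then 1 else
          if h : v ∈ T then (T.equivFin ⟨v, h⟩ : ℕ) + 2 else 0) = 0} = ↑B₁ := by
        ext w
        simp only [Set.mem_setOf_eq, Finset.mem_coe]
        constructor
        · rintro ⟨hw, hw0⟩
          by_cases hw1 : w ∈ B₁
          · exact hw1
          by_cases hw2 : w ∈ B₂
          · simp [hw1, hw2] at hw0
          · rw [if_neg hw1, if_neg hw2, dif_pos (hmemT w hw hw1 hw2)] at hw0; omega
        · intro hw1; exact ⟨h1 hw1, by simp [hw1]⟩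
      rw [hset]; exact hA1
    | 1 =>
      have hset : {v | v ∈ D.verts ∧ (if v ∈ B₁ then 0 else if v ∈ B₂ then 1 else
          if h : v ∈ T then (T.equivFin ⟨v, h⟩ : ℕ) + 2 else 0) = 1} = ↑B₂ := by
        ext w
        simp only [Set.mem_setOf_eq, Finset.mem_coe]
        constructor
        · rintro ⟨hw, hw0⟩
          by_cases hw1 : w ∈ B₁
          · simp [hw1] at hw0
          by_cases hw2 : w ∈ B₂
          · exact hw2
          · rw [if_neg hw1, if_neg hw2, dif_pos (hmemT w hw hw1 hw2)] at hw0; omega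
        · intro hw2
          refine ⟨h2 hw2, ?_⟩
          rw [if_neg (fun hw1 => (Finset.disjoint_left.1 hd) hw1 hw2), if_pos hw2]
      rw [hset]; exact hA2
    | (n+2) =>
      apply acyclicOn_subsingleton
      rintro a ⟨ha, hac⟩ b ⟨hb, hbc⟩
      dsimp only at hac hbc
      by_cases ha1 : a ∈ B₁
      · simp [ha1] at hac
      by_cases ha2 : a ∈ B₂
      · simp [ha1, ha2] at hac
      by_cases hb1 : b ∈ B₁
      · simp [hb1] at hbc
      by_cases hb2 : b ∈ B₂
      · simp [hb1, hb2] at hbc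
      have haT := hmemT a ha ha1 ha2
      have hbT := hmemT b hb hb1 hb2
      rw [if_neg ha1, if_neg ha2, dif_pos haT] at hac
      rw [if_neg hb1, if_neg hb2, dif_pos hbT] at hbc
      have : T.equivFin ⟨a, haT⟩ = T.equivFin ⟨b, hbT⟩ := by apply Fin.ext; omega
      exact Subtype.mk_eq_mk.1 (T.equivFin.injective this)

lemma not_colorable_crowded {E : Digraph'} {m : ℕ} (hcard : m + 2 ≤ E.verts.card)
    (hG2 : ∀ a b c, a ∈ E.verts → b ∈ E.verts → c ∈ E.verts → a ≠ b → a ≠ c → b ≠ c →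
      ¬ E.AcyclicOn {a, b, c})
    (hG1 : ∀ a b a' b', a ∈ E.verts → b ∈ E.verts → a' ∈ E.verts → b' ∈ E.verts →
      a ≠ b → a' ≠ b' → a ≠ a' → a ≠ b' → b ≠ a' → b ≠ b' →
      E.AcyclicOn {a, b} → E.AcyclicOn {a', b'} → False) :
    ¬ E.Colorable m := by
  classical
  rintro ⟨φ, hb, hcl⟩
  set fiber := fun c => E.verts.filter (fun v => φ v = c) with hfiber
  have hfibmem : ∀ c w, w ∈ fiber c → w ∈ E.verts ∧ φ w = c := by
    intro c w hw; exact Finset.mem_filter.1 hw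
  have hfibsub : ∀ c, ∀ (S : Set ℕ), (∀ x ∈ S, x ∈ fiber c) → E.AcyclicOn S := by
    intro c S hS
    apply acyclicOn_mono _ (hcl c)
    intro x hx
    exact hfibmem c x (hS x hx)
  have hfib2 : ∀ c, (fiber c).card ≤ 2 := by
    intro c
    by_contra hcon
    push_neg at hcon
    obtain ⟨a, b, c', ha, hb', hc', hab, hac, hbc⟩ := Finset.two_lt_card_iff.1 hcon
    refine hG2 a b c' (hfibmem c a ha).1 (hfibmem c b hb').1 (hfibmem c c' hc').1 hab hac hbc ?_
    apply hfibsub c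
    rintro x (rfl | rfl | rfl)
    exacts [ha, hb', hc']
  have hbig : ∀ c c', c ∈ Finset.range m → c' ∈ Finset.range m →
      2 ≤ (fiber c).card → 2 ≤ (fiber c').card → c = c' := by
    intro c c' _ _ h2 h2'
    by_contra hcc
    obtain ⟨a, ha, b, hb', hab⟩ := Finset.one_lt_card.1 h2
    obtain ⟨a', ha', b', hb'', hab'⟩ := Finset.one_lt_card.1 h2'
    have d1 := hfibmem c a ha; have d2 := hfibmem c b hb'
    have d3 := hfibmem c' a' ha'; have d4 := hfibmem c' b' hb''
    refine hG1 a b a' b' d1.1 d2.1 d3.1 d4.1 hab hab' ?_ ?_ ?_ ?_ ?_ ?_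
    · intro h; exact hcc (d1.2 ▸ h ▸ d3.2)
    · intro h; exact hcc (d1.2 ▸ h ▸ d4.2)
    · intro h; exact hcc (d2.2 ▸ h ▸ d3.2)
    · intro h; exact hcc (d2.2 ▸ h ▸ d4.2)
    · apply hfibsub c; rintro x (rfl | rfl); exacts [ha, hb']
    · apply hfibsub c'; rintro x (rfl | rfl); exacts [ha', hb'']
  have hsum : E.verts.card = ∑ c ∈ Finset.range m, (fiber c).card := by
    apply Finset.card_eq_sum_card_fiberwise
    intro x hx
    exact Finset.mem_range.2 (hb x hx)
  have hbound : ∑ c ∈ Finset.range m, (fiber c).card ≤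
      ∑ c ∈ Finset.range m, (1 + if 2 ≤ (fiber c).card then 1 else 0) := by
    apply Finset.sum_le_sum
    intro c _
    have := hfib2 c
    by_cases h2 : 2 ≤ (fiber c).card
    · rw [if_pos h2]; omega
    · rw [if_neg h2]; omega
  have hfiltcard : ((Finset.range m).filter (fun c => 2 ≤ (fiber c).card)).card ≤ 1 := by
    apply Finset.card_le_one.2
    intro a ha b hb'
    rcases Finset.mem_filter.1 ha with ⟨ham, ha2⟩
    rcases Finset.mem_filter.1 hb' with ⟨hbm, hb2⟩
    exact hbig a b ham hbm ha2 hb2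
  have heval : ∑ c ∈ Finset.range m, (1 + if 2 ≤ (fiber c).card then 1 else 0) =
      m + ((Finset.range m).filter (fun c => 2 ≤ (fiber c).card)).card := by
    rw [Finset.sum_add_distrib, Finset.sum_const, Finset.card_range, smul_eq_mul, mul_one,
      Finset.card_filter]
  have h2 : ∑ c ∈ Finset.range m, (fiber c).card ≤ m + 1 :=
    (hbound.trans heval.le).trans (Nat.add_le_add_left hfiltcard m)
  omega

end Dig15
namespace Dig15
open Digraph'

/-- `D` is the bidirected complete graph on `k+1` vertices minus the directed
triangle `(x,y),(y,z),(z,x)`. -/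
def Std (D : Digraph') (k x y z : ℕ) : Prop :=
  x ≠ y ∧ x ≠ z ∧ y ≠ z ∧ x ∈ D.verts ∧ y ∈ D.verts ∧ z ∈ D.verts ∧
  D.verts.card = k + 1 ∧
  ∀ u v, D.Adj u v ↔ (u ∈ D.verts ∧ v ∈ D.verts ∧ u ≠ v ∧
    ¬((u = x ∧ v = y) ∨ (u = y ∧ v = z) ∨ (u = z ∧ v = x)))

lemma std_rot {D : Digraph'} {k x y z : ℕ} (h : Std D k x y z) : Std D k y z x := by
  obtain ⟨hxy, hxz, hyz, hx, hy, hz, hcard, hadj⟩ := h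
  refine ⟨hyz, Ne.symm hxy, Ne.symm hxz, hy, hz, hx, hcard, ?_⟩
  intro u v
  rw [hadj u v]
  tauto

lemma std_adj_yx {D : Digraph'} {k x y z : ℕ} (h : Std D k x y z) : D.Adj y x := by
  obtain ⟨hxy, hxz, hyz, hx, hy, hz, hcard, hadj⟩ := h
  rw [hadj]
  refine ⟨hy, hx, Ne.symm hxy, ?_⟩
  rintro (⟨h1, -⟩ | ⟨-, h2⟩ | ⟨h3, -⟩)
  · exact hxy h1.symm
  · exact hxz h2
  · exact hyz h3

lemma std_not_adj_xy {D : Digraph'} {k x y z : ℕ} (h : Std D k x y z) : ¬ D.Adj x y := by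
  obtain ⟨hxy, hxz, hyz, hx, hy, hz, hcard, hadj⟩ := h
  rw [hadj]
  tauto

lemma std_not_acyclic_triple {D : Digraph'} {k x y z : ℕ} (h : Std D k x y z) :
    ¬ D.AcyclicOn {x, y, z} := by
  have h1 : D.Adj y x := std_adj_yx h
  have h2 : D.Adj z y := std_adj_yx (std_rot h)
  have h3 : D.Adj x z := std_adj_yx (std_rot (std_rot h))
  exact not_acyclicOn_triangle (by simp) (by simp) (by simp) h3 h2 h1

/-- If a pair is not one of the three special pairs, it is a digon. -/
lemma std_digon {D : Digraph'} {k x y z a b : ℕ} (h : Std D k x y z)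
    (ha : a ∈ D.verts) (hb : b ∈ D.verts) (hab : a ≠ b)
    (h1 : ({a, b} : Set ℕ) ≠ {x, y}) (h2 : ({a, b} : Set ℕ) ≠ {y, z})
    (h3 : ({a, b} : Set ℕ) ≠ {z, x}) : D.Adj a b ∧ D.Adj b a := by
  obtain ⟨hxy, hxz, hyz, hx, hy, hz, hcard, hadj⟩ := h
  constructor
  · rw [hadj]
    refine ⟨ha, hb, hab, ?_⟩
    rintro (⟨rfl, rfl⟩ | ⟨rfl, rfl⟩ | ⟨rfl, rfl⟩)
    · exact h1 rfl
    · exact h2 rfl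
    · exact h3 rfl
  · rw [hadj]
    refine ⟨hb, ha, Ne.symm hab, ?_⟩
    rintro (⟨rfl, rfl⟩ | ⟨rfl, rfl⟩ | ⟨rfl, rfl⟩)
    · exact h1 (Set.pair_comm a b)
    · exact h2 (Set.pair_comm a b)
    · exact h3 (Set.pair_comm a b)

lemma mem_of_pair_eq {a b u v : ℕ} (h : ({a, b} : Set ℕ) = {u, v}) :
    (a = u ∨ a = v) ∧ (b = u ∨ b = v) := by
  constructor
  · have : a ∈ ({a, b} : Set ℕ) := by simp
    rw [h] at this; simpa using this
  · have : b ∈ ({a, b} : Set ℕ) := by simp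
    rw [h] at this; simpa using this

lemma triple_eq_of_mem {a b c x y z : ℕ} (hab : a ≠ b) (hac : a ≠ c) (hbc : b ≠ c)
    (ha : a = x ∨ a = y ∨ a = z) (hb : b = x ∨ b = y ∨ b = z)
    (hc : c = x ∨ c = y ∨ c = z) : ({a, b, c} : Set ℕ) = {x, y, z} := by
  have hx' : x = a ∨ x = b ∨ x = c := by omega
  have hy' : y = a ∨ y = b ∨ y = c := by omega
  have hz' : z = a ∨ z = b ∨ z = c := by omega
  ext w
  simp only [Set.mem_insert_iff, Set.mem_singleton_iff]
  constructor
  · rintro (rfl | rfl | rfl) <;> tauto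
  · rintro (rfl | rfl | rfl) <;> tauto

lemma std_not_colorable {D : Digraph'} {k x y z : ℕ} (hk : 2 ≤ k) (h : Std D k x y z) :
    ¬ D.Colorable (k - 1) := by
  obtain ⟨hxy, hxz, hyz, hx, hy, hz, hcard, hadj⟩ := h
  have h' : Std D k x y z := ⟨hxy, hxz, hyz, hx, hy, hz, hcard, hadj⟩
  apply not_colorable_crowded (m := k - 1) (by omega)
  · -- no acyclic triples
    intro a b c ha hb hc hab hac hbc
    by_cases hAB : ({a, b} : Set ℕ) = {x, y} ∨ ({a, b} : Set ℕ) = {y, z} ∨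
        ({a, b} : Set ℕ) = {z, x}
    · by_cases hAC : ({a, c} : Set ℕ) = {x, y} ∨ ({a, c} : Set ℕ) = {y, z} ∨
          ({a, c} : Set ℕ) = {z, x}
      · by_cases hBC : ({b, c} : Set ℕ) = {x, y} ∨ ({b, c} : Set ℕ) = {y, z} ∨
            ({b, c} : Set ℕ) = {z, x}
        · -- all three pairs special: the triple is {x,y,z}
          have hamem : a = x ∨ a = y ∨ a = z := by
            rcases hAB with hp | hp | hp <;> have := (mem_of_pair_eq hp).1 <;> omega
          have hbmem : b = x ∨ b = y ∨ b = z := by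
            rcases hAB with hp | hp | hp <;> have := (mem_of_pair_eq hp).2 <;> omega
          have hcmem : c = x ∨ c = y ∨ c = z := by
            rcases hAC with hp | hp | hp <;> have := (mem_of_pair_eq hp).2 <;> omega
          rw [triple_eq_of_mem hab hac hbc hamem hbmem hcmem]
          exact std_not_acyclic_triple h'
        · push_neg at hBC
          obtain ⟨d1, d2⟩ := std_digon h' hb hc hbc hBC.1 hBC.2.1 hBC.2.2
          exact not_acyclicOn_digon (S := {a, b, c}) (by simp) (by simp) d1 d2
      · push_neg at hAC
        obtain ⟨d1, d2⟩ := std_digon h' ha hc hac hAC.1 hAC.2.1 hAC.2.2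
        exact not_acyclicOn_digon (S := {a, b, c}) (by simp) (by simp) d1 d2
    · push_neg at hAB
      obtain ⟨d1, d2⟩ := std_digon h' ha hb hab hAB.1 hAB.2.1 hAB.2.2
      exact not_acyclicOn_digon (S := {a, b, c}) (by simp) (by simp) d1 d2
  · -- no two disjoint soft pairs
    intro a b a' b' ha hb ha' hb' hab hab' haa' hab'' hba' hbb' hac1 hac2
    have soft1 : ¬ D.Adj a b ∨ ¬ D.Adj b a := by
      by_contra hcon
      push_neg at hcon
      exact not_acyclicOn_digon (S := {a, b}) (by simp) (by simp) hcon.1 hcon.2 hac1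
    have soft2 : ¬ D.Adj a' b' ∨ ¬ D.Adj b' a' := by
      by_contra hcon
      push_neg at hcon
      exact not_acyclicOn_digon (S := {a', b'}) (by simp) (by simp) hcon.1 hcon.2 hac2
    have key : ∀ u v, u ∈ D.verts → v ∈ D.verts → u ≠ v → ¬ D.Adj u v →
        (u = x ∨ u = y ∨ u = z) ∧ (v = x ∨ v = y ∨ v = z) := by
      intro u v hu hv huv hnadj
      by_contra hcon
      apply hnadj
      rw [hadj]
      refine ⟨hu, hv, huv, ?_⟩
      rintro (⟨rfl, rfl⟩ | ⟨rfl, rfl⟩ | ⟨rfl, rfl⟩) <;> tauto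
    have m1 : (a = x ∨ a = y ∨ a = z) ∧ (b = x ∨ b = y ∨ b = z) := by
      rcases soft1 with h | h
      · exact key a b ha hb hab h
      · exact (and_comm.1 (key b a hb ha (Ne.symm hab) h))
    have m2 : (a' = x ∨ a' = y ∨ a' = z) ∧ (b' = x ∨ b' = y ∨ b' = z) := by
      rcases soft2 with h | h
      · exact key a' b' ha' hb' hab' h
      · exact (and_comm.1 (key b' a' hb' ha' (Ne.symm hab') h))
    -- four distinct vertices among three
    obtain ⟨e1, e2⟩ := m1
    obtain ⟨e3, e4⟩ := m2
    omega

lemma std_colorable {D : Digraph'} {k x y z : ℕ} (hk : 2 ≤ k) (h : Std D k x y z) :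
    D.Colorable k := by
  obtain ⟨hxy, hxz, hyz, hx, hy, hz, hcard, hadj⟩ := h
  have h' : Std D k x y z := ⟨hxy, hxz, hyz, hx, hy, hz, hcard, hadj⟩
  have hB : ({x, y} : Finset ℕ) ⊆ D.verts := by
    intro w hw; rcases Finset.mem_insert.1 hw with rfl | hw
    · exact hx
    · rw [Finset.mem_singleton.1 hw]; exact hy
  have hA : D.AcyclicOn ↑({x, y} : Finset ℕ) := by
    have : (↑({x, y} : Finset ℕ) : Set ℕ) = {x, y} := by simp
    rw [this]
    exact acyclicOn_pair (std_not_adj_xy h')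
  have := build1 hB hA
  have hcard2 : ({x, y} : Finset ℕ).card = 2 := by
    rw [Finset.card_insert_of_notMem (by simp [hxy]), Finset.card_singleton]
  rw [hcard2, hcard] at this
  have heq : k + 1 - 2 + 1 = k := by omega
  rwa [heq] at this

lemma std_dichrom {D : Digraph'} {k x y z : ℕ} (hk : 2 ≤ k) (h : Std D k x y z) :
    D.dichrom = k := by
  have h1 := dichrom_le_of_colorable (std_colorable hk h)
  have h2 := std_not_colorable hk h
  by_contra hne
  have hlt : D.dichrom ≤ k - 1 := by omega
  exact h2 (colorable_of_dichrom_le hlt)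

end Dig15
namespace Dig15
open Digraph'

lemma pair_colorable {E : Digraph'} {a b : ℕ} (ha : a ∈ E.verts) (hb : b ∈ E.verts)
    (hab : a ≠ b) (hnadj : ¬ E.Adj a b) : E.Colorable (E.verts.card - 1) := by
  have hB : ({a, b} : Finset ℕ) ⊆ E.verts := by
    intro w hw
    rcases Finset.mem_insert.1 hw with rfl | hw
    · exact ha
    · rw [Finset.mem_singleton.1 hw]; exact hb
  have hA : E.AcyclicOn ↑({a, b} : Finset ℕ) := by
    have hcoe : (↑({a, b} : Finset ℕ) : Set ℕ) = {a, b} := by simp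
    rw [hcoe]
    exact acyclicOn_pair hnadj
  have hc2 : ({a, b} : Finset ℕ).card = 2 := by
    rw [Finset.card_insert_of_notMem (by simp [hab]), Finset.card_singleton]
  have hle : 2 ≤ E.verts.card := hc2 ▸ Finset.card_le_card hB
  have := build1 hB hA
  rw [hc2] at this
  have heq : E.verts.card - 2 + 1 = E.verts.card - 1 := by omega
  rwa [heq] at this

lemma std_delVert_colorable {D : Digraph'} {k x y z : ℕ} (hk : 2 ≤ k) (h : Std D k x y z)
    (v : ℕ) (hv : v ∈ D.verts) : (D.delVert v).Colorable (k - 1) := by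
  obtain ⟨hxy, hxz, hyz, hx, hy, hz, hcard, hadj⟩ := h
  have h' : Std D k x y z := ⟨hxy, hxz, hyz, hx, hy, hz, hcard, hadj⟩
  have hnxy : ¬ D.Adj x y := std_not_adj_xy h'
  have hnyz : ¬ D.Adj y z := std_not_adj_xy (std_rot h')
  have hnzx : ¬ D.Adj z x := std_not_adj_xy (std_rot (std_rot h'))
  have hcard' : (D.delVert v).verts.card = k := by
    show (D.verts.erase v).card = k
    rw [Finset.card_erase_of_mem hv, hcard]
    omega
  have main : ∀ a b : ℕ, a ∈ D.verts → b ∈ D.verts → a ≠ b → a ≠ v → b ≠ v →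
      ¬ D.Adj a b → (D.delVert v).Colorable (k - 1) := by
    intro a b ha hb hab hav hbv hnadj
    have := pair_colorable (E := D.delVert v) (a := a) (b := b)
      (Finset.mem_erase.2 ⟨hav, ha⟩) (Finset.mem_erase.2 ⟨hbv, hb⟩) hab
      (fun hadj' => hnadj hadj'.1)
    rwa [hcard'] at this
  by_cases hvx : v = x
  · subst hvx
    exact main y z hy hz hyz (Ne.symm hxy) (Ne.symm hxz) hnyz
  · by_cases hvy : v = y
    · subst hvy
      exact main z x hz hx (fun e => hxz e.symm) (Ne.symm hyz) (fun e => hvx e.symm) hnzx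
    · exact main x y hx hy hxy (fun e => hvx e.symm) (fun e => hvy e.symm) hnxy

lemma std_delArc_triple {D : Digraph'} {k x y z : ℕ} (hk : 2 ≤ k) (h : Std D k x y z) :
    (D.delArc y x).Colorable (k - 1) := by
  obtain ⟨hxy, hxz, hyz, hx, hy, hz, hcard, hadj⟩ := h
  have h' : Std D k x y z := ⟨hxy, hxz, hyz, hx, hy, hz, hcard, hadj⟩
  have hnxy : ¬ D.Adj x y := std_not_adj_xy h'
  have hnyz : ¬ D.Adj y z := std_not_adj_xy (std_rot h')
  have hnzx : ¬ D.Adj z x := std_not_adj_xy (std_rot (std_rot h'))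
  set E := D.delArc y x with hE
  have hB : ({x, y, z} : Finset ℕ) ⊆ E.verts := by
    intro w hw
    show w ∈ D.verts
    rcases Finset.mem_insert.1 hw with rfl | hw
    · exact hx
    rcases Finset.mem_insert.1 hw with rfl | hw
    · exact hy
    · rw [Finset.mem_singleton.1 hw]; exact hz
  have hA : E.AcyclicOn ↑({x, y, z} : Finset ℕ) := by
    apply acyclicOn_of_rank (fun w => if w = x then 0 else if w = z then 1 else 2)
    intro a b ha hb hEadj
    obtain ⟨hDadj, hne⟩ := hEadj
    simp only [Finset.coe_insert, Set.mem_insert_iff, Finset.coe_singleton,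
      Set.mem_singleton_iff] at ha hb
    rcases ha with rfl | rfl | rfl
    · rcases hb with rfl | rfl | rfl
      · exact absurd hDadj (D.loopless _)
      · exact absurd hDadj hnxy
      · simp [Ne.symm hxz]
    · rcases hb with rfl | rfl | rfl
      · exact (hne ⟨rfl, rfl⟩).elim
      · exact absurd hDadj (D.loopless _)
      · exact absurd hDadj hnyz
    · rcases hb with rfl | rfl | rfl
      · exact absurd hDadj hnzx
      · simp [Ne.symm hxz, Ne.symm hxy, hyz]
      · exact absurd hDadj (D.loopless _)
  have hc3 : ({x, y, z} : Finset ℕ).card = 3 := by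
    rw [Finset.card_insert_of_notMem (by simp [hxy, hxz]),
      Finset.card_insert_of_notMem (by simp [hyz]), Finset.card_singleton]
  have := build1 hB hA
  rw [hc3] at this
  have hEcard : E.verts.card = k + 1 := hcard
  rw [hEcard] at this
  have heq : k + 1 - 3 + 1 = k - 1 := by omega
  rwa [heq] at this

lemma std_delArc_two {D : Digraph'} {k x y z p q s t : ℕ} (hk : 2 ≤ k) (h : Std D k x y z)
    (hpq : D.Adj p q) (hs : s ∈ D.verts) (ht : t ∈ D.verts) (hst : s ≠ t)
    (hnst : ¬ D.Adj s t) (h1 : s ≠ p) (h2 : s ≠ q) (h3 : t ≠ p) (h4 : t ≠ q) :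
    (D.delArc p q).Colorable (k - 1) := by
  obtain ⟨hxy, hxz, hyz, hx, hy, hz, hcard, hadj⟩ := h
  have hp : p ∈ D.verts := (D.adj_mem hpq).1
  have hq : q ∈ D.verts := (D.adj_mem hpq).2
  have hpqne : p ≠ q := fun e => D.loopless p (e ▸ hpq)
  set E := D.delArc p q with hE
  have hB1 : ({p, q} : Finset ℕ) ⊆ E.verts := by
    intro w hw
    show w ∈ D.verts
    rcases Finset.mem_insert.1 hw with rfl | hw
    · exact hp
    · rw [Finset.mem_singleton.1 hw]; exact hq
  have hB2 : ({s, t} : Finset ℕ) ⊆ E.verts := by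
    intro w hw
    show w ∈ D.verts
    rcases Finset.mem_insert.1 hw with rfl | hw
    · exact hs
    · rw [Finset.mem_singleton.1 hw]; exact ht
  have hdisj : Disjoint ({p, q} : Finset ℕ) ({s, t} : Finset ℕ) := by
    rw [Finset.disjoint_left]
    intro w hw hw'
    simp only [Finset.mem_insert, Finset.mem_singleton] at hw hw'
    omega
  have hA1 : E.AcyclicOn ↑({p, q} : Finset ℕ) := by
    have hcoe : (↑({p, q} : Finset ℕ) : Set ℕ) = {p, q} := by simp
    rw [hcoe]
    exact acyclicOn_pair (fun hadj' => hadj'.2 ⟨rfl, rfl⟩)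
  have hA2 : E.AcyclicOn ↑({s, t} : Finset ℕ) := by
    have hcoe : (↑({s, t} : Finset ℕ) : Set ℕ) = {s, t} := by simp
    rw [hcoe]
    exact acyclicOn_pair (fun hadj' => hnst hadj'.1)
  have hfour : ({p, q, s, t} : Finset ℕ).card = 4 := by
    rw [Finset.card_insert_of_notMem (by simp; omega),
      Finset.card_insert_of_notMem (by simp; omega),
      Finset.card_insert_of_notMem (by simp; omega), Finset.card_singleton]
  have hsub4 : ({p, q, s, t} : Finset ℕ) ⊆ D.verts := by
    intro w hw
    simp only [Finset.mem_insert, Finset.mem_singleton] at hw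
    rcases hw with rfl | rfl | rfl | rfl
    exacts [hp, hq, hs, ht]
  have hk3 : 4 ≤ k + 1 := by
    have := Finset.card_le_card hsub4
    rw [hfour, hcard] at this
    exact this
  have hc2 : ({p, q} : Finset ℕ).card = 2 := by
    rw [Finset.card_insert_of_notMem (by simp [hpqne]), Finset.card_singleton]
  have hc2' : ({s, t} : Finset ℕ).card = 2 := by
    rw [Finset.card_insert_of_notMem (by simp [hst]), Finset.card_singleton]
  have := build2 hB1 hB2 hdisj hA1 hA2
  rw [hc2, hc2'] at this
  have hEcard : E.verts.card = k + 1 := hcard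
  rw [hEcard] at this
  have heq : k + 1 - 2 - 2 + 2 = k - 1 := by omega
  rwa [heq] at this

lemma std_delArc_colorable {D : Digraph'} {k x y z p q : ℕ} (hk : 2 ≤ k) (h : Std D k x y z)
    (hpq : D.Adj p q) : (D.delArc p q).Colorable (k - 1) := by
  obtain ⟨hxy, hxz, hyz, hx, hy, hz, hcard, hadj⟩ := h
  have h' : Std D k x y z := ⟨hxy, hxz, hyz, hx, hy, hz, hcard, hadj⟩
  have hnxy : ¬ D.Adj x y := std_not_adj_xy h'
  have hnyz : ¬ D.Adj y z := std_not_adj_xy (std_rot h')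
  have hnzx : ¬ D.Adj z x := std_not_adj_xy (std_rot (std_rot h'))
  have hpqne : p ≠ q := fun e => D.loopless p (e ▸ hpq)
  by_cases hpx : x = p
  · subst hpx
    by_cases hqy : y = q
    · subst hqy; exact absurd hpq hnxy
    by_cases hqz : z = q
    · subst hqz
      exact std_delArc_triple hk (std_rot (std_rot h'))
    · exact std_delArc_two hk h' hpq hy hz hyz hnyz (Ne.symm hxy) hqy (Ne.symm hxz) hqz
  by_cases hpy : y = p
  · subst hpy
    by_cases hqx : x = q
    · subst hqx
      exact std_delArc_triple hk h'
    by_cases hqz : z = q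
    · subst hqz; exact absurd hpq hnyz
    · exact std_delArc_two hk h' hpq hz hx (Ne.symm hxz) hnzx (Ne.symm hyz) hqz hxy hqx
  by_cases hpz : z = p
  · subst hpz
    by_cases hqx : x = q
    · subst hqx; exact absurd hpq hnzx
    by_cases hqy : y = q
    · subst hqy
      exact std_delArc_triple hk (std_rot h')
    · exact std_delArc_two hk h' hpq hx hy hxy hnxy hxz hqx hyz hqy
  · by_cases hqx : x = q
    · subst hqx
      exact std_delArc_two hk h' hpq hy hz hyz hnyz hpy (Ne.symm hxy) hpz (Ne.symm hxz)
    by_cases hqy : y = q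
    · subst hqy
      exact std_delArc_two hk h' hpq hz hx (Ne.symm hxz) hnzx hpz (Ne.symm hyz) hpx hxy
    by_cases hqz : z = q
    · subst hqz
      exact std_delArc_two hk h' hpq hx hy hxy hnxy hpx hxz hpy hyz
    · exact std_delArc_two hk h' hpq hx hy hxy hnxy hpx hqx hpy hqy

lemma std_critical {D : Digraph'} {k x y z : ℕ} (hk : 2 ≤ k) (h : Std D k x y z) :
    D.Critical := by
  intro H hsub hne
  have hdD := std_dichrom hk h
  rw [hdD]
  suffices hcol : H.Colorable (k - 1) by
    have := dichrom_le_of_colorable hcol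
    omega
  by_cases hverts : H.verts = D.verts
  · have harc : ∃ p q, D.Adj p q ∧ ¬ H.Adj p q := by
      by_contra hno
      push_neg at hno
      exact hne (digraph_ext hverts (fun u v => ⟨fun h' => hsub.2 h', fun h' => hno u v h'⟩))
    obtain ⟨p, q, hpq, hnH⟩ := harc
    apply colorable_subdigraph (D := D.delArc p q) ?_ (std_delArc_colorable hk h hpq)
    refine ⟨?_, ?_⟩
    · intro w hw
      show w ∈ D.verts
      exact hverts ▸ hw
    · intro u v huv
      exact ⟨hsub.2 huv, fun ⟨e1, e2⟩ => hnH (e1 ▸ e2 ▸ huv)⟩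
  · have hss : H.verts ⊂ D.verts := ssubset_of_subset_of_ne hsub.1 hverts
    obtain ⟨v, hv, hvH⟩ := Finset.exists_of_ssubset hss
    apply colorable_subdigraph (D := D.delVert v) ?_ (std_delVert_colorable hk h v hv)
    refine ⟨?_, ?_⟩
    · intro w hw
      exact Finset.mem_erase.2 ⟨fun e => hvH (e ▸ hw), hsub.1 hw⟩
    · intro u w huw
      refine ⟨hsub.2 huw, ?_, ?_⟩
      · exact fun e => hvH (e ▸ (H.adj_mem huw).1)
      · exact fun e => hvH (e ▸ (H.adj_mem huw).2)

lemma std_is_critical {D : Digraph'} {k x y z : ℕ} (hk : 2 ≤ k) (h : Std D k x y z) :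
    D.IsCritical k ∧ D.order = k + 1 := by
  refine ⟨⟨std_dichrom hk h, std_critical hk h⟩, ?_⟩
  exact h.2.2.2.2.2.2.1

end Dig15
namespace Dig15
open Digraph'

def cycle3 (x y z : ℕ) (hxy : x ≠ y) (hxz : x ≠ z) (hyz : y ≠ z) : Digraph' where
  verts := {x, y, z}
  Adj u v := (u = x ∧ v = y) ∨ (u = y ∧ v = z) ∨ (u = z ∧ v = x)
  adj_mem := by
    rintro u v (⟨rfl, rfl⟩ | ⟨rfl, rfl⟩ | ⟨rfl, rfl⟩) <;>
      simp [Finset.mem_insert, Finset.mem_singleton]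
  loopless := by
    rintro v (⟨rfl, h⟩ | ⟨rfl, h⟩ | ⟨rfl, h⟩) <;> omega

def biComplete (s : Finset ℕ) : Digraph' where
  verts := s
  Adj u v := u ∈ s ∧ v ∈ s ∧ u ≠ v
  adj_mem := by intro u v h; exact ⟨h.1, h.2.1⟩
  loopless := by intro v h; exact h.2.2 rfl

lemma biComplete_isBC (s : Finset ℕ) : (biComplete s).IsBiorientedComplete :=
  fun _ _ => Iff.rfl

lemma natCard_eq_one_of_setEq {P : ℕ → Prop} {a : ℕ} (h : {w | P w} = {a}) :
    Nat.card {w // P w} = 1 := by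
  have h1 : Nat.card ↥({w | P w} : Set ℕ) = ({w | P w} : Set ℕ).ncard :=
    Nat.card_coe_set_eq _
  have h2 : ({w | P w} : Set ℕ).ncard = 1 := by rw [h]; exact Set.ncard_singleton a
  exact h1.trans h2

lemma exists_unique_of_natCard_one {P : ℕ → Prop} (h : Nat.card {w // P w} = 1) :
    ∃ a, ∀ w, P w ↔ w = a := by
  have h' : ({w | P w} : Set ℕ).ncard = 1 := by
    rw [← Nat.card_coe_set_eq]; exact h
  obtain ⟨a, ha⟩ := Set.ncard_eq_one.1 h'
  exact ⟨a, fun w => by rw [← Set.mem_singleton_iff, ← ha]; rfl⟩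

lemma triple_card {x y z : ℕ} (hxy : x ≠ y) (hxz : x ≠ z) (hyz : y ≠ z) :
    ({x, y, z} : Finset ℕ).card = 3 := by
  rw [Finset.card_insert_of_notMem (by simp [hxy, hxz]),
    Finset.card_insert_of_notMem (by simp [hyz]), Finset.card_singleton]

lemma cycle3_isDirectedCycle {x y z : ℕ} (hxy : x ≠ y) (hxz : x ≠ z) (hyz : y ≠ z) :
    (cycle3 x y z hxy hxz hyz).IsDirectedCycle := by
  set C := cycle3 x y z hxy hxz hyz with hC
  have axy : C.Adj x y := Or.inl ⟨rfl, rfl⟩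
  have ayz : C.Adj y z := Or.inr (Or.inl ⟨rfl, rfl⟩)
  have azx : C.Adj z x := Or.inr (Or.inr ⟨rfl, rfl⟩)
  have hmem : ∀ v, v ∈ C.verts → v = x ∨ v = y ∨ v = z := by
    intro v hv
    have hv' : v ∈ ({x, y, z} : Finset ℕ) := hv
    simpa [Finset.mem_insert, Finset.mem_singleton] using hv'
  refine ⟨?_, ?_, ?_⟩
  · show 2 ≤ ({x, y, z} : Finset ℕ).card
    rw [triple_card hxy hxz hyz]; omega
  · intro v hv
    have outx : {w | C.Adj x w} = {y} := by
      ext w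
      constructor
      · rintro (⟨-, h2⟩ | ⟨h1, -⟩ | ⟨h1, -⟩)
        · exact h2
        · exact absurd h1 hxy
        · exact absurd h1 hxz
      · rintro rfl; exact axy
    have outy : {w | C.Adj y w} = {z} := by
      ext w
      constructor
      · rintro (⟨h1, -⟩ | ⟨-, h2⟩ | ⟨h1, -⟩)
        · exact absurd h1.symm hxy
        · exact h2
        · exact absurd h1 hyz
      · rintro rfl; exact ayz
    have outz : {w | C.Adj z w} = {x} := by
      ext w
      constructor
      · rintro (⟨h1, -⟩ | ⟨h1, -⟩ | ⟨-, h2⟩)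
        · exact absurd h1.symm hxz
        · exact absurd h1.symm hyz
        · exact h2
      · rintro rfl; exact azx
    have inx : {w | C.Adj w x} = {z} := by
      ext w
      constructor
      · rintro (⟨-, h2⟩ | ⟨-, h2⟩ | ⟨h1, -⟩)
        · exact absurd h2 hxy
        · exact absurd h2 hxz
        · exact h1
      · rintro rfl; exact azx
    have iny : {w | C.Adj w y} = {x} := by
      ext w
      constructor
      · rintro (⟨h1, -⟩ | ⟨-, h2⟩ | ⟨-, h2⟩)
        · exact h1
        · exact absurd h2 hyz
        · exact absurd h2.symm hxy
      · rintro rfl; exact axy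
    have inz : {w | C.Adj w z} = {y} := by
      ext w
      constructor
      · rintro (⟨-, h2⟩ | ⟨h1, -⟩ | ⟨-, h2⟩)
        · exact absurd h2 (Ne.symm hyz)
        · exact h1
        · exact absurd h2 (Ne.symm hxz)
      · rintro rfl; exact ayz
    rcases hmem v hv with rfl | rfl | rfl
    · exact ⟨natCard_eq_one_of_setEq outx, natCard_eq_one_of_setEq inx⟩
    · exact ⟨natCard_eq_one_of_setEq outy, natCard_eq_one_of_setEq iny⟩
    · exact ⟨natCard_eq_one_of_setEq outz, natCard_eq_one_of_setEq inz⟩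
  · intro u hu v hv
    have cx : Relation.TransGen C.Adj x x :=
      Relation.TransGen.head axy (Relation.TransGen.head ayz (Relation.TransGen.single azx))
    rcases hmem u hu with rfl | rfl | rfl <;> rcases hmem v hv with rfl | rfl | rfl
    · exact cx
    · exact Relation.TransGen.single axy
    · exact Relation.TransGen.head axy (Relation.TransGen.single ayz)
    · exact Relation.TransGen.head ayz (Relation.TransGen.single azx)
    · exact Relation.TransGen.head ayz (Relation.TransGen.head azx
        (Relation.TransGen.single axy))
    · exact Relation.TransGen.single ayz
    · exact Relation.TransGen.single azx
    · exact Relation.TransGen.head azx (Relation.TransGen.single axy)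
    · exact Relation.TransGen.head azx (Relation.TransGen.head axy
        (Relation.TransGen.single ayz))

lemma std_join {D : Digraph'} {k x y z : ℕ} (hk : 2 ≤ k) (h : Std D k x y z) :
    ∃ Dk C : Digraph', Dk.IsBiorientedComplete ∧ Dk.order = k - 2 ∧
      C.IsDirectedCycle ∧ C.order = 3 ∧ Digraph'.IsDiracJoin D Dk C := by
  obtain ⟨hxy, hxz, hyz, hx, hy, hz, hcard, hadj⟩ := h
  have hzy : z ≠ y := Ne.symm hyz
  set C := cycle3 x z y hxz hxy hzy with hCdef
  set T : Finset ℕ := {x, z, y} with hT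
  have hTsub : T ⊆ D.verts := by
    intro w hw
    simp only [hT, Finset.mem_insert, Finset.mem_singleton] at hw
    rcases hw with rfl | rfl | rfl
    exacts [hx, hz, hy]
  have hTcard : T.card = 3 := triple_card hxz hxy hzy
  have hmemT : ∀ w, w ∈ T ↔ (w = x ∨ w = z ∨ w = y) := by
    intro w; simp [hT, Finset.mem_insert, Finset.mem_singleton]
  refine ⟨biComplete (D.verts \ T), C, biComplete_isBC _, ?_, cycle3_isDirectedCycle _ _ _,
    ?_, ?_, ?_, ?_⟩
  · show (D.verts \ T).card = k - 2
    rw [Finset.card_sdiff_of_subset hTsub, hTcard, hcard]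
    omega
  · show T.card = 3
    exact hTcard
  · show Disjoint (D.verts \ T) T
    exact Finset.sdiff_disjoint
  · show D.verts = (D.verts \ T) ∪ T
    exact (Finset.sdiff_union_of_subset hTsub).symm
  · intro u v
    rw [hadj u v]
    constructor
    · rintro ⟨hu, hv, hne, hforb⟩
      by_cases huT : u ∈ T
      · by_cases hvT : v ∈ T
        · refine Or.inr (Or.inl ?_)
          show (u = x ∧ v = z) ∨ (u = z ∧ v = y) ∨ (u = y ∧ v = x)
          rcases (hmemT u).1 huT with h1 | h1 | h1 <;>
            rcases (hmemT v).1 hvT with h2 | h2 | h2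
          · exact absurd (h1.trans h2.symm) hne
          · exact Or.inl ⟨h1, h2⟩
          · exact absurd (Or.inl ⟨h1, h2⟩) hforb
          · exact absurd (Or.inr (Or.inr ⟨h1, h2⟩)) hforb
          · exact absurd (h1.trans h2.symm) hne
          · exact Or.inr (Or.inl ⟨h1, h2⟩)
          · exact Or.inr (Or.inr ⟨h1, h2⟩)
          · exact absurd (Or.inr (Or.inl ⟨h1, h2⟩)) hforb
          · exact absurd (h1.trans h2.symm) hne
        · exact Or.inr (Or.inr (Or.inr ⟨huT, Finset.mem_sdiff.2 ⟨hv, hvT⟩⟩))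
      · by_cases hvT : v ∈ T
        · exact Or.inr (Or.inr (Or.inl ⟨Finset.mem_sdiff.2 ⟨hu, huT⟩, hvT⟩))
        · exact Or.inl ⟨Finset.mem_sdiff.2 ⟨hu, huT⟩, Finset.mem_sdiff.2 ⟨hv, hvT⟩, hne⟩
    · rintro (⟨hu, hv, hne⟩ | hCadj | ⟨hu, hv⟩ | ⟨hu, hv⟩)
      · refine ⟨(Finset.mem_sdiff.1 hu).1, (Finset.mem_sdiff.1 hv).1, hne, ?_⟩
        intro hforb
        apply (Finset.mem_sdiff.1 hu).2
        apply (hmemT u).2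
        rcases hforb with ⟨h1, -⟩ | ⟨h1, -⟩ | ⟨h1, -⟩
        · exact Or.inl h1
        · exact Or.inr (Or.inr h1)
        · exact Or.inr (Or.inl h1)
      · have hCadj' : (u = x ∧ v = z) ∨ (u = z ∧ v = y) ∨ (u = y ∧ v = x) := hCadj
        rcases hCadj' with ⟨h1, h2⟩ | ⟨h1, h2⟩ | ⟨h1, h2⟩
        · refine ⟨by rw [h1]; exact hx, by rw [h2]; exact hz, by rw [h1, h2]; exact hxz, ?_⟩
          rintro (⟨h3, h4⟩ | ⟨h3, h4⟩ | ⟨h3, h4⟩) <;> omega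
        · refine ⟨by rw [h1]; exact hz, by rw [h2]; exact hy, by rw [h1, h2]; exact hzy, ?_⟩
          rintro (⟨h3, h4⟩ | ⟨h3, h4⟩ | ⟨h3, h4⟩) <;> omega
        · refine ⟨by rw [h1]; exact hy, by rw [h2]; exact hx,
            by rw [h1, h2]; exact Ne.symm hxy, ?_⟩
          rintro (⟨h3, h4⟩ | ⟨h3, h4⟩ | ⟨h3, h4⟩) <;> omega
      · rcases Finset.mem_sdiff.1 hu with ⟨hu', huT⟩
        refine ⟨hu', hTsub hv, fun e => huT (by rw [e]; exact hv), ?_⟩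
        intro hforb
        apply huT
        apply (hmemT u).2
        rcases hforb with ⟨h1, -⟩ | ⟨h1, -⟩ | ⟨h1, -⟩
        · exact Or.inl h1
        · exact Or.inr (Or.inr h1)
        · exact Or.inr (Or.inl h1)
      · rcases Finset.mem_sdiff.1 hv with ⟨hv', hvT⟩
        refine ⟨hTsub hu, hv', fun e => hvT (by rw [← e]; exact hu), ?_⟩
        intro hforb
        apply hvT
        apply (hmemT v).2
        rcases hforb with ⟨-, h1⟩ | ⟨-, h1⟩ | ⟨-, h1⟩
        · exact Or.inr (Or.inr h1)
        · exact Or.inr (Or.inl h1)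
        · exact Or.inl h1

end Dig15
namespace Dig15
open Digraph'

lemma cycle_struct_aux {C : Digraph'} {x y z : ℕ} (hC : C.IsDirectedCycle)
    (hxy : x ≠ y) (hxz : x ≠ z) (hyz : y ≠ z) (hverts : C.verts = {x, y, z})
    (haxy : C.Adj x y) :
    ∀ u v, C.Adj u v ↔ ((u = x ∧ v = y) ∨ (u = y ∧ v = z) ∨ (u = z ∧ v = x)) := by
  obtain ⟨-, hdeg, hconn⟩ := hC
  have hx : x ∈ C.verts := by rw [hverts]; simp
  have hy : y ∈ C.verts := by rw [hverts]; simp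
  have hz : z ∈ C.verts := by rw [hverts]; simp
  have hmem : ∀ w, w ∈ C.verts → w = x ∨ w = y ∨ w = z := by
    intro w hw
    rw [hverts] at hw
    simpa [Finset.mem_insert, Finset.mem_singleton] using hw
  -- out-neighbour of x is y
  obtain ⟨a, hax⟩ := exists_unique_of_natCard_one ((hdeg x hx).1)
  have hay : y = a := (hax y).1 haxy
  subst hay
  -- out-neighbour of y
  obtain ⟨b, hby⟩ := exists_unique_of_natCard_one ((hdeg y hy).1)
  have hbadj : C.Adj y b := (hby b).2 rfl
  have hbmem : b = x ∨ b = y ∨ b = z := hmem b (C.adj_mem hbadj).2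
  have hbney : b ≠ y := fun e => C.loopless y (e ▸ hbadj)
  have hbz : b = z := by
    rcases hbmem with hbx | hby' | hbz
    · -- b = x : x and y form a closed walk, z unreachable
      exfalso
      have reach : ∀ v, Relation.TransGen C.Adj x v → (v = x ∨ v = y) := by
        intro v hv
        induction hv with
        | single h1 => exact Or.inr ((hax _).1 h1)
        | tail h1 h2 ih =>
          rcases ih with rfl | rfl
          · exact Or.inr ((hax _).1 h2)
          · exact Or.inl (((hby _).1 h2).trans hbx)
      rcases reach z (hconn x hx z hz) with e | e
      · exact hxz e.symm
      · exact hyz e.symm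
    · exact absurd hby' hbney
    · exact hbz
  have hbyz : ∀ w, C.Adj y w ↔ w = z := fun w => (hby w).trans (by rw [hbz])
  -- out-neighbour of z
  obtain ⟨c, hcz⟩ := exists_unique_of_natCard_one ((hdeg z hz).1)
  have hcadj : C.Adj z c := (hcz c).2 rfl
  have hcmem : c = x ∨ c = y ∨ c = z := hmem c (C.adj_mem hcadj).2
  have hcnez : c ≠ z := fun e => C.loopless z (e ▸ hcadj)
  have hcx : c = x := by
    rcases hcmem with hcx | hcy | hcz'
    · exact hcx
    · -- c = y : then y has in-degree ≥ 2
      exfalso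
      obtain ⟨d, hdy⟩ := exists_unique_of_natCard_one ((hdeg y hy).2)
      have e1 : x = d := (hdy x).1 haxy
      have e2 : z = d := (hdy z).1 (hcy ▸ hcadj)
      exact hxz (e1.trans e2.symm)
    · exact absurd hcz' hcnez
  have hczx : ∀ w, C.Adj z w ↔ w = x := fun w => (hcz w).trans (by rw [hcx])
  intro u v
  constructor
  · intro huv
    rcases hmem u (C.adj_mem huv).1 with h | h | h
    · exact Or.inl ⟨h, (hax v).1 (h ▸ huv)⟩
    · exact Or.inr (Or.inl ⟨h, (hbyz v).1 (h ▸ huv)⟩)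
    · exact Or.inr (Or.inr ⟨h, (hczx v).1 (h ▸ huv)⟩)
  · rintro (⟨h1, h2⟩ | ⟨h1, h2⟩ | ⟨h1, h2⟩)
    · rw [h1, h2]; exact haxy
    · rw [h1, h2]; exact (hbyz z).2 rfl
    · rw [h1, h2]; exact (hczx x).2 rfl

lemma cycle_struct {C : Digraph'} (hC : C.IsDirectedCycle) (h3 : C.order = 3) :
    ∃ x y z, x ≠ y ∧ x ≠ z ∧ y ≠ z ∧ C.verts = {x, y, z} ∧
      (∀ u v, C.Adj u v ↔ ((u = x ∧ v = y) ∨ (u = y ∧ v = z) ∨ (u = z ∧ v = x))) := by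
  obtain ⟨x, y, z, hxy, hxz, hyz, hverts⟩ := Finset.card_eq_three.1 h3
  have hx : x ∈ C.verts := by rw [hverts]; simp
  obtain ⟨a, hax⟩ := exists_unique_of_natCard_one ((hC.2.1 x hx).1)
  have haadj : C.Adj x a := (hax a).2 rfl
  have hanex : a ≠ x := fun e => C.loopless x (e ▸ haadj)
  have hamem : a = x ∨ a = y ∨ a = z := by
    have := (C.adj_mem haadj).2
    rw [hverts] at this
    simpa [Finset.mem_insert, Finset.mem_singleton] using this
  rcases hamem with h | h | h
  · exact absurd h hanex
  · -- a = y : cycle is x → y → z → x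
    exact ⟨x, y, z, hxy, hxz, hyz, hverts,
      cycle_struct_aux ⟨hC.1, hC.2.1, hC.2.2⟩ hxy hxz hyz hverts (h ▸ haadj)⟩
  · -- a = z : cycle is x → z → y → x
    have hverts' : C.verts = {x, z, y} := by
      rw [hverts]
      ext w
      simp only [Finset.mem_insert, Finset.mem_singleton]
      tauto
    exact ⟨x, z, y, hxz, hxy, Ne.symm hyz, hverts',
      cycle_struct_aux ⟨hC.1, hC.2.1, hC.2.2⟩ hxz hxy (Ne.symm hyz) hverts' (h ▸ haadj)⟩

lemma join_std {D Dk C : Digraph'} {k : ℕ} (hk : 2 ≤ k) (hBC : Dk.IsBiorientedComplete)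
    (hDkord : Dk.order = k - 2) (hCcyc : C.IsDirectedCycle) (hCord : C.order = 3)
    (hjoin : Digraph'.IsDiracJoin D Dk C) : ∃ a b c, Std D k a b c := by
  obtain ⟨x, y, z, hxy, hxz, hyz, hverts, hchar⟩ := cycle_struct hCcyc hCord
  obtain ⟨hdisj, hun, hadj⟩ := hjoin
  have hCm : ∀ w, w ∈ C.verts ↔ (w = x ∨ w = y ∨ w = z) := by
    intro w
    rw [hverts]
    simp [Finset.mem_insert, Finset.mem_singleton]
  have hdisj' : ∀ w, w ∈ Dk.verts → w ∉ C.verts := fun w hw hw' =>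
    Finset.disjoint_left.1 hdisj hw hw'
  have hxD : x ∈ D.verts := by
    rw [hun]; exact Finset.mem_union_right _ ((hCm x).2 (Or.inl rfl))
  have hyD : y ∈ D.verts := by
    rw [hun]; exact Finset.mem_union_right _ ((hCm y).2 (Or.inr (Or.inl rfl)))
  have hzD : z ∈ D.verts := by
    rw [hun]; exact Finset.mem_union_right _ ((hCm z).2 (Or.inr (Or.inr rfl)))
  have hcard : D.verts.card = k + 1 := by
    rw [hun, Finset.card_union_of_disjoint hdisj]
    have h1 : Dk.verts.card = k - 2 := hDkord
    have h2 : C.verts.card = 3 := hCord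
    rw [h1, h2]
    omega
  refine ⟨x, z, y, hxz, hxy, Ne.symm hyz, hxD, hzD, hyD, hcard, ?_⟩
  intro u v
  rw [hadj u v]
  constructor
  · rintro (hDk | hc | ⟨hu, hv⟩ | ⟨hu, hv⟩)
    · obtain ⟨hu, hv, hne⟩ := (hBC u v).1 hDk
      refine ⟨by rw [hun]; exact Finset.mem_union_left _ hu,
        by rw [hun]; exact Finset.mem_union_left _ hv, hne, ?_⟩
      rintro (⟨h1, -⟩ | ⟨h1, -⟩ | ⟨h1, -⟩)
      · exact hdisj' u hu ((hCm u).2 (Or.inl h1))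
      · exact hdisj' u hu ((hCm u).2 (Or.inr (Or.inr h1)))
      · exact hdisj' u hu ((hCm u).2 (Or.inr (Or.inl h1)))
    · have hc' := (hchar u v).1 hc
      have huC : u ∈ C.verts := (C.adj_mem hc).1
      have hvC : v ∈ C.verts := (C.adj_mem hc).2
      have huD : u ∈ D.verts := by rw [hun]; exact Finset.mem_union_right _ huC
      have hvD : v ∈ D.verts := by rw [hun]; exact Finset.mem_union_right _ hvC
      rcases hc' with ⟨h1, h2⟩ | ⟨h1, h2⟩ | ⟨h1, h2⟩
      · refine ⟨huD, hvD, by rw [h1, h2]; exact hxy, ?_⟩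
        rintro (⟨h3, h4⟩ | ⟨h3, h4⟩ | ⟨h3, h4⟩) <;> omega
      · refine ⟨huD, hvD, by rw [h1, h2]; exact hyz, ?_⟩
        rintro (⟨h3, h4⟩ | ⟨h3, h4⟩ | ⟨h3, h4⟩) <;> omega
      · refine ⟨huD, hvD, by rw [h1, h2]; exact Ne.symm hxz, ?_⟩
        rintro (⟨h3, h4⟩ | ⟨h3, h4⟩ | ⟨h3, h4⟩) <;> omega
    · refine ⟨by rw [hun]; exact Finset.mem_union_left _ hu,
        by rw [hun]; exact Finset.mem_union_right _ hv,
        fun e => hdisj' u hu (by rw [e]; exact hv), ?_⟩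
      rintro (⟨h1, -⟩ | ⟨h1, -⟩ | ⟨h1, -⟩)
      · exact hdisj' u hu ((hCm u).2 (Or.inl h1))
      · exact hdisj' u hu ((hCm u).2 (Or.inr (Or.inr h1)))
      · exact hdisj' u hu ((hCm u).2 (Or.inr (Or.inl h1)))
    · refine ⟨by rw [hun]; exact Finset.mem_union_right _ hu,
        by rw [hun]; exact Finset.mem_union_left _ hv,
        fun e => hdisj' v hv (by rw [← e]; exact hu), ?_⟩
      rintro (⟨-, h1⟩ | ⟨-, h1⟩ | ⟨-, h1⟩)
      · exact hdisj' v hv ((hCm v).2 (Or.inr (Or.inr h1)))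
      · exact hdisj' v hv ((hCm v).2 (Or.inr (Or.inl h1)))
      · exact hdisj' v hv ((hCm v).2 (Or.inl h1))
  · rintro ⟨hu, hv, hne, hforb⟩
    rw [hun] at hu hv
    rcases Finset.mem_union.1 hu with huk | huc <;> rcases Finset.mem_union.1 hv with hvk | hvc
    · exact Or.inl ((hBC u v).2 ⟨huk, hvk, hne⟩)
    · exact Or.inr (Or.inr (Or.inl ⟨huk, hvc⟩))
    · exact Or.inr (Or.inr (Or.inr ⟨huc, hvk⟩))
    · refine Or.inr (Or.inl ((hchar u v).2 ?_))
      rcases (hCm u).1 huc with h1 | h1 | h1 <;> rcases (hCm v).1 hvc with h2 | h2 | h2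
      · exact absurd (h1.trans h2.symm) hne
      · exact Or.inl ⟨h1, h2⟩
      · exact absurd (Or.inl ⟨h1, h2⟩) hforb
      · exact absurd (Or.inr (Or.inr ⟨h1, h2⟩)) hforb
      · exact absurd (h1.trans h2.symm) hne
      · exact Or.inr (Or.inl ⟨h1, h2⟩)
      · exact Or.inr (Or.inr ⟨h1, h2⟩)
      · exact absurd (Or.inr (Or.inl ⟨h1, h2⟩)) hforb
      · exact absurd (h1.trans h2.symm) hne

end Dig15
namespace Dig15
open Digraph'

lemma delVert_sub (D : Digraph') (v : ℕ) : IsSubdigraph (D.delVert v) D :=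
  ⟨Finset.erase_subset _ _, fun _ _ h => h.1⟩

lemma delVert_ne {D : Digraph'} {v : ℕ} (hv : v ∈ D.verts) : D.delVert v ≠ D := by
  intro e
  have h1 : (D.delVert v).verts = D.verts := congrArg Digraph'.verts e
  have h2 : v ∈ (D.delVert v).verts := by rw [h1]; exact hv
  exact (Finset.mem_erase.1 h2).1 rfl

lemma delArc_sub (D : Digraph') (p q : ℕ) : IsSubdigraph (D.delArc p q) D :=
  ⟨Finset.Subset.refl _, fun _ _ h => h.1⟩

lemma delArc_ne {D : Digraph'} {p q : ℕ} (h : D.Adj p q) : D.delArc p q ≠ D := by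
  intro e
  have h2 : (D.delArc p q).Adj p q := by rw [e]; exact h
  exact h2.2 ⟨rfl, rfl⟩

lemma critical_sub_colorable {D H : Digraph'} {k : ℕ} (hcrit : D.Critical)
    (hdich : D.dichrom = k) (hsub : IsSubdigraph H D) (hne : H ≠ D) :
    H.Colorable (k - 1) := by
  have := hcrit H hsub hne
  rw [hdich] at this
  exact colorable_of_dichrom_le (by omega)

lemma miss_functional_out {D : Digraph'} {k : ℕ} (hk : 2 ≤ k) (hcrit : D.Critical)
    (hdich : D.dichrom = k) (hcard : D.verts.card = k + 1) {v a b : ℕ}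
    (hv : v ∈ D.verts) (ha : a ∈ D.verts) (hb : b ∈ D.verts)
    (hva : v ≠ a) (hvb : v ≠ b) (hnva : ¬ D.Adj v a) (hnvb : ¬ D.Adj v b) : a = b := by
  classical
  by_contra hab
  obtain ⟨φ, hφb, hφc⟩ :=
    critical_sub_colorable hcrit hdich (delVert_sub D v) (delVert_ne hv)
  set Nfin := D.verts.filter (fun w => D.Adj v w) with hNfin
  have hNsub : Nfin ⊆ ((D.verts.erase v).erase a).erase b := by
    intro w hw
    rcases Finset.mem_filter.1 hw with ⟨hwv, hwadj⟩
    refine Finset.mem_erase.2 ⟨fun e => hnvb (e ▸ hwadj), Finset.mem_erase.2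
      ⟨fun e => hnva (e ▸ hwadj), Finset.mem_erase.2
      ⟨fun e => D.loopless v (e ▸ hwadj), hwv⟩⟩⟩
  have hNcard : Nfin.card ≤ k - 2 := by
    have h1 := Finset.card_le_card hNsub
    have h2 : (((D.verts.erase v).erase a).erase b).card = k - 2 := by
      rw [Finset.card_erase_of_mem, Finset.card_erase_of_mem, Finset.card_erase_of_mem hv,
        hcard]
      · omega
      · exact Finset.mem_erase.2 ⟨fun e => hva e.symm, ha⟩
      · exact Finset.mem_erase.2 ⟨fun e => hab e.symm, Finset.mem_erase.2
          ⟨fun e => hvb e.symm, hb⟩⟩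
    omega
  have himcard : (Nfin.image φ).card ≤ k - 2 := le_trans (Finset.card_image_le) hNcard
  have hex : ∃ c ∈ Finset.range (k - 1), c ∉ Nfin.image φ := by
    by_contra hno
    push_neg at hno
    have hsub : Finset.range (k - 1) ⊆ Nfin.image φ := fun c hc => hno c hc
    have := Finset.card_le_card hsub
    rw [Finset.card_range] at this
    omega
  obtain ⟨c, hcm, hcni⟩ := hex
  have hcol : D.Colorable (k - 1) := by
    apply colorable_extend hv ⟨hφb, hφc⟩ (Finset.mem_range.1 hcm)
    left
    intro w hadj he
    exact hcni (Finset.mem_image.2 ⟨w, Finset.mem_filter.2 ⟨(D.adj_mem hadj).2, hadj⟩, he⟩)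
  exact not_colorable_lt hdich (by omega) hcol

lemma miss_functional_in {D : Digraph'} {k : ℕ} (hk : 2 ≤ k) (hcrit : D.Critical)
    (hdich : D.dichrom = k) (hcard : D.verts.card = k + 1) {v a b : ℕ}
    (hv : v ∈ D.verts) (ha : a ∈ D.verts) (hb : b ∈ D.verts)
    (hva : a ≠ v) (hvb : b ≠ v) (hnva : ¬ D.Adj a v) (hnvb : ¬ D.Adj b v) : a = b := by
  classical
  by_contra hab
  obtain ⟨φ, hφb, hφc⟩ :=
    critical_sub_colorable hcrit hdich (delVert_sub D v) (delVert_ne hv)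
  set Nfin := D.verts.filter (fun w => D.Adj w v) with hNfin
  have hNsub : Nfin ⊆ ((D.verts.erase v).erase a).erase b := by
    intro w hw
    rcases Finset.mem_filter.1 hw with ⟨hwv, hwadj⟩
    refine Finset.mem_erase.2 ⟨fun e => hnvb (e ▸ hwadj), Finset.mem_erase.2
      ⟨fun e => hnva (e ▸ hwadj), Finset.mem_erase.2
      ⟨fun e => D.loopless v (e ▸ hwadj), hwv⟩⟩⟩
  have hNcard : Nfin.card ≤ k - 2 := by
    have h1 := Finset.card_le_card hNsub
    have h2 : (((D.verts.erase v).erase a).erase b).card = k - 2 := by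
      rw [Finset.card_erase_of_mem, Finset.card_erase_of_mem, Finset.card_erase_of_mem hv,
        hcard]
      · omega
      · exact Finset.mem_erase.2 ⟨hva, ha⟩
      · exact Finset.mem_erase.2 ⟨fun e => hab e.symm, Finset.mem_erase.2 ⟨hvb, hb⟩⟩
    omega
  have himcard : (Nfin.image φ).card ≤ k - 2 := le_trans (Finset.card_image_le) hNcard
  have hex : ∃ c ∈ Finset.range (k - 1), c ∉ Nfin.image φ := by
    by_contra hno
    push_neg at hno
    have hsub : Finset.range (k - 1) ⊆ Nfin.image φ := fun c hc => hno c hc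
    have := Finset.card_le_card hsub
    rw [Finset.card_range] at this
    omega
  obtain ⟨c, hcm, hcni⟩ := hex
  have hcol : D.Colorable (k - 1) := by
    apply colorable_extend hv ⟨hφb, hφc⟩ (Finset.mem_range.1 hcm)
    right
    intro w hadj he
    exact hcni (Finset.mem_image.2 ⟨w, Finset.mem_filter.2 ⟨(D.adj_mem hadj).1, hadj⟩, he⟩)
  exact not_colorable_lt hdich (by omega) hcol

lemma no_two_disjoint {D : Digraph'} {k : ℕ} (hcard : D.verts.card = k + 1)
    (hnc : ¬ D.Colorable (k - 1)) {a b a' b' : ℕ}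
    (ha : a ∈ D.verts) (hb : b ∈ D.verts) (ha' : a' ∈ D.verts) (hb' : b' ∈ D.verts)
    (hab : a ≠ b) (hab' : a' ≠ b') (hnadj : ¬ D.Adj a b) (hnadj' : ¬ D.Adj a' b')
    (d1 : a ≠ a') (d2 : a ≠ b') (d3 : b ≠ a') (d4 : b ≠ b') : False := by
  have hB1 : ({a, b} : Finset ℕ) ⊆ D.verts := by
    intro w hw
    rcases Finset.mem_insert.1 hw with rfl | hw
    · exact ha
    · rw [Finset.mem_singleton.1 hw]; exact hb
  have hB2 : ({a', b'} : Finset ℕ) ⊆ D.verts := by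
    intro w hw
    rcases Finset.mem_insert.1 hw with rfl | hw
    · exact ha'
    · rw [Finset.mem_singleton.1 hw]; exact hb'
  have hdisj : Disjoint ({a, b} : Finset ℕ) ({a', b'} : Finset ℕ) := by
    rw [Finset.disjoint_left]
    intro w hw hw'
    simp only [Finset.mem_insert, Finset.mem_singleton] at hw hw'
    omega
  have hA1 : D.AcyclicOn ↑({a, b} : Finset ℕ) := by
    have hcoe : (↑({a, b} : Finset ℕ) : Set ℕ) = {a, b} := by simp
    rw [hcoe]; exact acyclicOn_pair hnadj
  have hA2 : D.AcyclicOn ↑({a', b'} : Finset ℕ) := by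
    have hcoe : (↑({a', b'} : Finset ℕ) : Set ℕ) = {a', b'} := by simp
    rw [hcoe]; exact acyclicOn_pair hnadj'
  have hfour : ({a, b, a', b'} : Finset ℕ).card = 4 := by
    rw [Finset.card_insert_of_notMem (by simp; omega),
      Finset.card_insert_of_notMem (by simp; omega),
      Finset.card_insert_of_notMem (by simp; omega), Finset.card_singleton]
  have hsub4 : ({a, b, a', b'} : Finset ℕ) ⊆ D.verts := by
    intro w hw
    simp only [Finset.mem_insert, Finset.mem_singleton] at hw
    rcases hw with rfl | rfl | rfl | rfl
    exacts [ha, hb, ha', hb']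
  have hk3 : 4 ≤ k + 1 := by
    have := Finset.card_le_card hsub4
    rw [hfour, hcard] at this
    exact this
  have hc2 : ({a, b} : Finset ℕ).card = 2 := by
    rw [Finset.card_insert_of_notMem (by simp [hab]), Finset.card_singleton]
  have hc2' : ({a', b'} : Finset ℕ).card = 2 := by
    rw [Finset.card_insert_of_notMem (by simp [hab']), Finset.card_singleton]
  have := build2 hB1 hB2 hdisj hA1 hA2
  rw [hc2, hc2', hcard] at this
  have heq : k + 1 - 2 - 2 + 2 = k - 1 := by omega
  rw [heq] at this
  exact hnc this

lemma exists_missing {D : Digraph'} {k : ℕ} (hdich : D.dichrom = k)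
    (hcard : D.verts.card = k + 1) :
    ∃ a b, a ∈ D.verts ∧ b ∈ D.verts ∧ a ≠ b ∧ ¬ D.Adj a b := by
  by_contra hno
  push_neg at hno
  obtain ⟨φ, hφb, hφc⟩ : D.Colorable k := by
    have : {m | D.Colorable m}.Nonempty := ⟨_, colorable_card D⟩
    have hmem := Nat.sInf_mem this
    rw [show sInf {m | D.Colorable m} = D.dichrom from rfl, hdich] at hmem
    exact hmem
  have hlt : (Finset.range k).card < D.verts.card := by
    rw [Finset.card_range, hcard]; omega
  obtain ⟨u, hu, v, hv, huv, he⟩ := Finset.exists_ne_map_eq_of_card_lt_of_maps_to hlt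
    (fun w hw => Finset.mem_range.2 (hφb w hw))
  have hadj1 : D.Adj u v := hno u v hu hv huv
  have hadj2 : D.Adj v u := hno v u hv hu (Ne.symm huv)
  exact not_acyclicOn_digon (S := {w | w ∈ D.verts ∧ φ w = φ u})
    ⟨hu, rfl⟩ ⟨hv, he.symm⟩ hadj1 hadj2 (hφc (φ u))

end Dig15
namespace Dig15
open Digraph'

lemma contra2pairs {E : Digraph'} {m : ℕ} (hcard : E.verts.card = m + 2) {a₁ b₁ a₂ b₂ : ℕ}
    (hmeet : a₁ = a₂ ∨ a₁ = b₂ ∨ b₁ = a₂ ∨ b₁ = b₂)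
    (hmiss : ∀ u v, u ∈ E.verts → v ∈ E.verts → u ≠ v → ¬ E.Adj u v →
      ({u, v} : Set ℕ) = {a₁, b₁} ∨ ({u, v} : Set ℕ) = {a₂, b₂}) : ¬ E.Colorable m := by
  have hdig : ∀ u v, u ∈ E.verts → v ∈ E.verts → u ≠ v →
      ({u, v} : Set ℕ) ≠ {a₁, b₁} → ({u, v} : Set ℕ) ≠ {a₂, b₂} →
      E.Adj u v ∧ E.Adj v u := by
    intro u v hu hv huv n1 n2
    constructor
    · by_contra hna
      rcases hmiss u v hu hv huv hna with h | h
      · exact n1 h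
      · exact n2 h
    · by_contra hna
      rcases hmiss v u hv hu (Ne.symm huv) hna with h | h
      · exact n1 ((Set.pair_comm u v).trans h)
      · exact n2 ((Set.pair_comm u v).trans h)
  apply not_colorable_crowded (by omega)
  · -- no acyclic triples
    intro a b c ha hb hc hab hac hbc
    by_cases e1 : ({a, b} : Set ℕ) = {a₁, b₁} ∨ ({a, b} : Set ℕ) = {a₂, b₂}
    · by_cases e2 : ({a, c} : Set ℕ) = {a₁, b₁} ∨ ({a, c} : Set ℕ) = {a₂, b₂}
      · by_cases e3 : ({b, c} : Set ℕ) = {a₁, b₁} ∨ ({b, c} : Set ℕ) = {a₂, b₂}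
        · exfalso
          have d12 : ({a, b} : Set ℕ) ≠ {a, c} := by
            intro h
            have := (mem_of_pair_eq h).2
            omega
          have d13 : ({a, b} : Set ℕ) ≠ {b, c} := by
            intro h
            have := (mem_of_pair_eq h).1
            omega
          have d23 : ({a, c} : Set ℕ) ≠ {b, c} := by
            intro h
            have := (mem_of_pair_eq h).1
            omega
          rcases e1 with e1 | e1 <;> rcases e2 with e2 | e2 <;> rcases e3 with e3 | e3
          · exact d12 (e1.trans e2.symm)
          · exact d12 (e1.trans e2.symm)
          · exact d13 (e1.trans e3.symm)
          · exact d23 (e2.trans e3.symm)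
          · exact d23 (e2.trans e3.symm)
          · exact d13 (e1.trans e3.symm)
          · exact d12 (e1.trans e2.symm)
          · exact d12 (e1.trans e2.symm)
        · push_neg at e3
          obtain ⟨g1, g2⟩ := hdig b c hb hc hbc e3.1 e3.2
          exact not_acyclicOn_digon (S := {a, b, c}) (by simp) (by simp) g1 g2
      · push_neg at e2
        obtain ⟨g1, g2⟩ := hdig a c ha hc hac e2.1 e2.2
        exact not_acyclicOn_digon (S := {a, b, c}) (by simp) (by simp) g1 g2
    · push_neg at e1
      obtain ⟨g1, g2⟩ := hdig a b ha hb hab e1.1 e1.2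
      exact not_acyclicOn_digon (S := {a, b, c}) (by simp) (by simp) g1 g2
  · -- no two disjoint soft pairs
    intro a b a' b' ha hb ha' hb' hab hab' d1 d2 d3 d4 hac1 hac2
    have c1 : ({a, b} : Set ℕ) = {a₁, b₁} ∨ ({a, b} : Set ℕ) = {a₂, b₂} := by
      by_contra hcon
      push_neg at hcon
      obtain ⟨g1, g2⟩ := hdig a b ha hb hab hcon.1 hcon.2
      exact not_acyclicOn_digon (S := {a, b}) (by simp) (by simp) g1 g2 hac1
    have c2 : ({a', b'} : Set ℕ) = {a₁, b₁} ∨ ({a', b'} : Set ℕ) = {a₂, b₂} := by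
      by_contra hcon
      push_neg at hcon
      obtain ⟨g1, g2⟩ := hdig a' b' ha' hb' hab' hcon.1 hcon.2
      exact not_acyclicOn_digon (S := {a', b'}) (by simp) (by simp) g1 g2 hac2
    rcases c1 with c1 | c1 <;> rcases c2 with c2 | c2 <;>
      have f1 := mem_of_pair_eq c1 <;> have f2 := mem_of_pair_eq c2 <;> omega

lemma critical_std {D : Digraph'} {k : ℕ} (hk : 2 ≤ k) (hcrit : D.IsCritical k)
    (hord : D.order = k + 1) : ∃ x y z, Std D k x y z := by
  obtain ⟨hdich, hcr⟩ := hcrit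
  have hcard : D.verts.card = k + 1 := hord
  have hnc : ¬ D.Colorable (k - 1) := not_colorable_lt hdich (by omega)
  -- abbreviation for missing arcs
  let M : ℕ → ℕ → Prop := fun u v => u ∈ D.verts ∧ v ∈ D.verts ∧ u ≠ v ∧ ¬ D.Adj u v
  have hP0 : ∀ u v, u ∈ D.verts → v ∈ D.verts → u ≠ v → ¬ M u v → D.Adj u v := by
    intro u v hu hv huv hnm
    by_contra hna
    exact hnm ⟨hu, hv, huv, hna⟩
  have hfout : ∀ v a b, M v a → M v b → a = b := by
    intro v a b h1 h2
    exact miss_functional_out hk hcr hdich hcard h1.1 h1.2.1 h2.2.1 h1.2.2.1 h2.2.2.1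
      h1.2.2.2 h2.2.2.2
  have hfin : ∀ v a b, M a v → M b v → a = b := by
    intro v a b h1 h2
    exact miss_functional_in hk hcr hdich hcard h1.2.1 h1.1 h2.1 h1.2.2.1 h2.2.2.1
      h1.2.2.2 h2.2.2.2
  have hP1 : ∀ a b a' b', M a b → M a' b' → a ≠ a' → a ≠ b' → b ≠ a' → b ≠ b' → False := by
    intro a b a' b' h1 h2 d1 d2 d3 d4
    exact no_two_disjoint hcard hnc h1.1 h1.2.1 h2.1 h2.2.1 h1.2.2.1 h2.2.2.1
      h1.2.2.2 h2.2.2.2 d1 d2 d3 d4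
  have hP4 : ∃ a b, M a b := by
    obtain ⟨a, b, h1, h2, h3, h4⟩ := exists_missing hdich hcard
    exact ⟨a, b, h1, h2, h3, h4⟩
  -- Claim A : no digons in the complement
  have claimA : ∀ a b, M a b → M b a → False := by
    intro a b hab hba
    have h3 : 3 ≤ D.verts.card := by omega
    have hwex : ∃ w, w ∈ (D.verts.erase a).erase b := by
      apply Finset.card_pos.1
      have e1 : D.verts.card - 1 ≤ (D.verts.erase a).card := Finset.pred_card_le_card_erase
      have e2 : (D.verts.erase a).card - 1 ≤ ((D.verts.erase a).erase b).card :=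
        Finset.pred_card_le_card_erase
      omega
    obtain ⟨w, hw⟩ := hwex
    obtain ⟨hwb, hw2⟩ := Finset.mem_erase.1 hw
    obtain ⟨hwa, hwD⟩ := Finset.mem_erase.1 hw2
    have haw : D.Adj a w := by
      apply hP0 a w hab.1 hwD (fun e => hwa e.symm)
      intro hmaw
      exact hwb (hfout a w b hmaw hab)
    have hcol : (D.delArc a w).Colorable (k - 1) :=
      critical_sub_colorable hcr hdich (delArc_sub D a w) (delArc_ne haw)
    -- complement of D has only the pairs {a,b}; after deleting (a,w) also {a,w}
    have hMchar : ∀ u v, M u v → (u = a ∧ v = b) ∨ (u = b ∧ v = a) := by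
      intro u v huv
      by_cases hua : u = a
      · exact Or.inl ⟨hua, hfout a v b (hua ▸ huv) hab⟩
      by_cases hub : u = b
      · exact Or.inr ⟨hub, hfout b v a (hub ▸ huv) hba⟩
      by_cases hva : v = a
      · exact Or.inr ⟨hfin a u b (hva ▸ huv) hba, hva⟩
      by_cases hvb : v = b
      · exact Or.inl ⟨hfin b u a (hvb ▸ huv) hab, hvb⟩
      · exact (hP1 u v a b huv hab hua hub hva hvb).elim
    refine contra2pairs (E := D.delArc a w) (m := k - 1) (a₁ := a) (b₁ := b) (a₂ := a)
      (b₂ := w) ?_ (Or.inl rfl) ?_ hcol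
    · show D.verts.card = k - 1 + 2
      omega
    · intro u v hu hv huv hnadj
      by_cases hE : u = a ∧ v = w
      · right; rw [hE.1, hE.2]
      · have hDna : ¬ D.Adj u v := by
          intro hD
          exact hnadj ⟨hD, hE⟩
        rcases hMchar u v ⟨hu, hv, huv, hDna⟩ with ⟨h1, h2⟩ | ⟨h1, h2⟩
        · left; rw [h1, h2]
        · left; rw [h1, h2]; exact Set.pair_comm b a
  -- Claim B : every missing arc has a successor
  have claimB : ∀ a b, M a b → ∃ c, M b c := by
    intro a b hab
    by_contra hno
    push_neg at hno
    have hnba : ¬ M b a := fun h => claimA a b hab h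
    have hba : D.Adj b a := hP0 b a hab.2.1 hab.1 (Ne.symm hab.2.2.1) hnba
    have hcol : (D.delArc b a).Colorable (k - 1) :=
      critical_sub_colorable hcr hdich (delArc_sub D b a) (delArc_ne hba)
    by_cases hex : ∃ u, M u a
    · obtain ⟨u₀, hu₀⟩ := hex
      have hu₀b : u₀ ≠ b := fun e => claimA a b hab (e ▸ hu₀)
      refine contra2pairs (E := D.delArc b a) (m := k - 1) (a₁ := a) (b₁ := b) (a₂ := u₀)
        (b₂ := a) ?_ (Or.inr (Or.inl rfl)) ?_ hcol
      · show D.verts.card = k - 1 + 2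
        omega
      · intro u v hu hv huv hnadj
        by_cases hE : u = b ∧ v = a
        · left; rw [hE.1, hE.2]; exact Set.pair_comm b a
        · have hDna : ¬ D.Adj u v := fun hD => hnadj ⟨hD, hE⟩
          have hM : M u v := ⟨hu, hv, huv, hDna⟩
          by_cases hua : u = a
          · left
            have : v = b := hfout a v b (hua ▸ hM) hab
            rw [hua, this]
          by_cases hub : u = b
          · exact absurd (hub ▸ hM) (fun h => hno v h)
          by_cases hva : v = a
          · right
            have : u = u₀ := hfin a u u₀ (hva ▸ hM) hu₀
            rw [this, hva]
          by_cases hvb : v = b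
          · left
            have : u = a := hfin b u a (hvb ▸ hM) hab
            rw [this, hvb]
          · exact (hP1 u v a b hM hab hua hub hva hvb).elim
    · push_neg at hex
      refine contra2pairs (E := D.delArc b a) (m := k - 1) (a₁ := a) (b₁ := b) (a₂ := a)
        (b₂ := b) ?_ (Or.inl rfl) ?_ hcol
      · show D.verts.card = k - 1 + 2
        omega
      · intro u v hu hv huv hnadj
        by_cases hE : u = b ∧ v = a
        · left; rw [hE.1, hE.2]; exact Set.pair_comm b a
        · have hDna : ¬ D.Adj u v := fun hD => hnadj ⟨hD, hE⟩
          have hM : M u v := ⟨hu, hv, huv, hDna⟩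
          by_cases hua : u = a
          · left
            have : v = b := hfout a v b (hua ▸ hM) hab
            rw [hua, this]
          by_cases hub : u = b
          · exact absurd (hub ▸ hM) (fun h => hno v h)
          by_cases hva : v = a
          · exact absurd (hva ▸ hM) (hex u)
          by_cases hvb : v = b
          · left
            have : u = a := hfin b u a (hvb ▸ hM) hab
            rw [this, hvb]
          · exact (hP1 u v a b hM hab hua hub hva hvb).elim
  -- assemble the directed triangle of missing arcs
  obtain ⟨x, y, hxy⟩ := hP4
  obtain ⟨z, hyz⟩ := claimB x y hxy
  have hzx_ne : z ≠ x := by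
    intro e
    exact claimA x y hxy (e ▸ hyz)
  obtain ⟨w, hzw⟩ := claimB y z hyz
  have hwy : w ≠ y := by
    intro e
    have : x = z := hfin y x z hxy (e ▸ hzw)
    exact hzx_ne this.symm
  have hwx : w = x := by
    by_contra hwnx
    exact hP1 z w x y hzw hxy hzx_ne (Ne.symm hyz.2.2.1) hwnx hwy
  have hzx : M z x := hwx ▸ hzw
  have hMchar : ∀ u v, M u v → ((u = x ∧ v = y) ∨ (u = y ∧ v = z) ∨ (u = z ∧ v = x)) := by
    intro u v huv
    by_cases hux : u = x
    · exact Or.inl ⟨hux, hfout x v y (hux ▸ huv) hxy⟩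
    by_cases huy : u = y
    · exact Or.inr (Or.inl ⟨huy, hfout y v z (huy ▸ huv) hyz⟩)
    by_cases huz : u = z
    · exact Or.inr (Or.inr ⟨huz, hfout z v x (huz ▸ huv) hzx⟩)
    by_cases hvx : v = x
    · exact absurd (hfin x u z (hvx ▸ huv) hzx) huz
    by_cases hvy : v = y
    · exact absurd (hfin y u x (hvy ▸ huv) hxy) hux
    by_cases hvz : v = z
    · exact absurd (hfin z u y (hvz ▸ huv) hyz) huy
    · exact (hP1 u v x y huv hxy hux huy hvx hvy).elim
  refine ⟨x, y, z, hxy.2.2.1, Ne.symm hzx_ne, hyz.2.2.1, hxy.1, hxy.2.1, hyz.2.1, hcard, ?_⟩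
  intro u v
  constructor
  · intro huv
    refine ⟨(D.adj_mem huv).1, (D.adj_mem huv).2, fun e => D.loopless u (e ▸ huv), ?_⟩
    rintro (⟨h1, h2⟩ | ⟨h1, h2⟩ | ⟨h1, h2⟩)
    · exact hxy.2.2.2 (h1 ▸ h2 ▸ huv)
    · exact hyz.2.2.2 (h1 ▸ h2 ▸ huv)
    · exact hzx.2.2.2 (h1 ▸ h2 ▸ huv)
  · rintro ⟨hu, hv, hne, hforb⟩
    apply hP0 u v hu hv hne
    intro hM
    exact hforb (hMchar u v hM)

end Dig15
/-- For `k ≥ 2`, the unique `k`-critical digraph on `k + 1` vertices is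
`D^±(K_{k-2}) ⊞ C⃗₃`. -/
theorem stmt15 (k : ℕ) (hk : 2 ≤ k) (D : Digraph') :
    (D.IsCritical k ∧ D.order = k + 1) ↔
    ∃ Dk C : Digraph', Dk.IsBiorientedComplete ∧ Dk.order = k - 2 ∧
      C.IsDirectedCycle ∧ C.order = 3 ∧ Digraph'.IsDiracJoin D Dk C := by
  constructor
  · rintro ⟨hcrit, hord⟩
    obtain ⟨x, y, z, hstd⟩ := Dig15.critical_std hk hcrit hord
    exact Dig15.std_join hk hstd
  · rintro ⟨Dk, C, hBC, hDkord, hCcyc, hCord, hjoin⟩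
    obtain ⟨a, b, c, hstd⟩ := Dig15.join_std hk hBC hDkord hCcyc hCord hjoin
    exact Dig15.std_is_critical hk hstd
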